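/- arXiv:1911.10405 — 3 statements merged into one kernel-verified Lean document; each statement's English description precedes it below -/
import Mathlib

section
/- (Iwahori level decomposition, Lemma 5.2, type A_{n−1} instance.) Let λ ∈ ℤⁿ be regular dominant (λ_1 > ⋯ > λ_n) and let μ ∈ ℤⁿ. Then there is a bijection between the set of left K-cosets K\(K·π^{μ}·U⁺ ∩ K·π^{λ}·K) and the disjoint union over w ∈ S_n of the sets of left I⁻-cosets I⁻\(I⁻·w⁻¹·π^{μ}·U⁺ ∩ I⁻·π^{λ}·K). -/
open Matrix Pointwise

noncomputable section

/-- `π^μ = diag(p^{μ_1},…,p^{μ_n})` as an element of `GL_n(ℚ_p)`. -/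
def piPow (p : ℕ) [Fact p.Prime] (n : ℕ) (μ : Fin n → ℤ) : GL (Fin n) ℚ_[p] where
  val := diagonal fun i => (p : ℚ_[p]) ^ (μ i)
  inv := diagonal fun i => (p : ℚ_[p]) ^ (-μ i)
  val_inv := by
    have hp : (p : ℚ_[p]) ≠ 0 := Nat.cast_ne_zero.mpr (Fact.out : p.Prime).ne_zero
    rw [diagonal_mul_diagonal]
    have h : (fun i => (p : ℚ_[p]) ^ (μ i) * (p : ℚ_[p]) ^ (-μ i)) = fun _ => (1 : ℚ_[p]) := by
      funext i; rw [← zpow_add₀ hp]; simp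
    rw [h, diagonal_one]
  inv_val := by
    have hp : (p : ℚ_[p]) ≠ 0 := Nat.cast_ne_zero.mpr (Fact.out : p.Prime).ne_zero
    rw [diagonal_mul_diagonal]
    have h : (fun i => (p : ℚ_[p]) ^ (-μ i) * (p : ℚ_[p]) ^ (μ i)) = fun _ => (1 : ℚ_[p]) := by
      funext i; rw [← zpow_add₀ hp]; simp
    rw [h, diagonal_one]

/-- `K = GL_n(ℤ_p)`: matrices with entries in `ℤ_p` whose determinant is a unit of `ℤ_p`. -/
def Kgp (p : ℕ) [Fact p.Prime] (n : ℕ) : Set (GL (Fin n) ℚ_[p]) :=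
  {g | (∀ i j, ‖(g : Matrix (Fin n) (Fin n) ℚ_[p]) i j‖ ≤ 1) ∧
    ‖(g : Matrix (Fin n) (Fin n) ℚ_[p]).det‖ = 1}

/-- `U⁺`: upper triangular unipotent matrices. -/
def Uplus (p : ℕ) [Fact p.Prime] (n : ℕ) : Set (GL (Fin n) ℚ_[p]) :=
  {g | (∀ i, (g : Matrix (Fin n) (Fin n) ℚ_[p]) i i = 1) ∧
    ∀ i j : Fin n, j < i → (g : Matrix (Fin n) (Fin n) ℚ_[p]) i j = 0}

/-- `U⁻`: lower triangular unipotent matrices. -/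
def Uminus (p : ℕ) [Fact p.Prime] (n : ℕ) : Set (GL (Fin n) ℚ_[p]) :=
  {g | (∀ i, (g : Matrix (Fin n) (Fin n) ℚ_[p]) i i = 1) ∧
    ∀ i j : Fin n, i < j → (g : Matrix (Fin n) (Fin n) ℚ_[p]) i j = 0}

/-- The simple coroot `e_i − e_{i+1}` (0-indexed `i`), as a vector in `ℤⁿ`. -/
def simpleCoroot (n : ℕ) (i : ℕ) : Fin n → ℤ :=
  fun j => (if (j : ℕ) = i then 1 else 0) - (if (j : ℕ) = i + 1 then 1 else 0)

/-- Dominance order: `μ ≤ λ` iff `λ − μ` is a nonnegative integral combination of the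
simple coroots `e_i − e_{i+1}`, `1 ≤ i ≤ n−1`. -/
def domLE (n : ℕ) (μ lam : Fin n → ℤ) : Prop :=
  ∃ c : ℕ → ℕ,
    (fun j => lam j - μ j) = ∑ i ∈ Finset.range (n - 1), fun j => (c i : ℤ) * simpleCoroot n i j

/-- The permutation matrix of `w ∈ S_n` as an element of `GL_n(ℚ_p)`; the assignment
`w ↦ permGL p n w` is a group embedding of `S_n` into `GL_n(ℚ_p)`. -/
def permGL (p : ℕ) [Fact p.Prime] (n : ℕ) (w : Equiv.Perm (Fin n)) : GL (Fin n) ℚ_[p] where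
  val := (w⁻¹).permMatrix ℚ_[p]
  inv := w.permMatrix ℚ_[p]
  val_inv := by
    show ((w⁻¹).toPEquiv.toMatrix : Matrix (Fin n) (Fin n) ℚ_[p]) * w.toPEquiv.toMatrix = 1
    rw [← PEquiv.toMatrix_trans, ← Equiv.toPEquiv_trans]
    have h : Equiv.trans w⁻¹ w = Equiv.refl (Fin n) := by ext x; simp
    rw [h, Equiv.toPEquiv_refl, PEquiv.toMatrix_refl]
  inv_val := by
    show (w.toPEquiv.toMatrix : Matrix (Fin n) (Fin n) ℚ_[p]) * (w⁻¹).toPEquiv.toMatrix = 1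
    rw [← PEquiv.toMatrix_trans, ← Equiv.toPEquiv_trans]
    have h : Equiv.trans w w⁻¹ = Equiv.refl (Fin n) := by ext x; simp
    rw [h, Equiv.toPEquiv_refl, PEquiv.toMatrix_refl]

/-- Coxeter length of a permutation: the number of inversions. -/
def permLength (n : ℕ) (w : Equiv.Perm (Fin n)) : ℕ :=
  ((Finset.univ : Finset (Fin n × Fin n)).filter fun q => q.1 < q.2 ∧ w q.2 < w q.1).card

end

/-- The opposite Iwahori subgroup `I⁻ = {g ∈ K : g mod p is lower triangular}`. -/
def Iminus (p : ℕ) [Fact p.Prime] (n : ℕ) : Set (GL (Fin n) ℚ_[p]) :=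
  {g | g ∈ Kgp p n ∧
    ∀ i j : Fin n, i < j → ‖(g : Matrix (Fin n) (Fin n) ℚ_[p]) i j‖ ≤ (p : ℝ)⁻¹}

namespace IwahoriAux

open Matrix Pointwise

variable {p : ℕ} [Fact p.Prime] {n : ℕ}

local notation "GLn" => GL (Fin n) ℚ_[p]

abbrev Mv (g : GL (Fin n) ℚ_[p]) : Matrix (Fin n) (Fin n) ℚ_[p] := (g : Matrix (Fin n) (Fin n) ℚ_[p])

/-- If `σ i ≤ τ i` for all `i`, then `σ = τ`. -/
lemma perm_eq_of_le (σ τ : Equiv.Perm (Fin n)) (h : ∀ i, σ i ≤ τ i) : σ = τ := by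
  have hsum : ∑ i, ((σ i : ℕ)) = ∑ i, ((τ i : ℕ)) := by
    rw [Equiv.sum_comp σ (fun i => (i : ℕ)), Equiv.sum_comp τ (fun i => (i : ℕ))]
  have h' : ∀ i ∈ Finset.univ, ((σ i : ℕ)) = ((τ i : ℕ)) :=
    (Finset.sum_eq_sum_iff_of_le (fun i _ => Fin.le_iff_val_le_val.mp (h i))).mp hsum
  ext i
  exact h' i (Finset.mem_univ i)

lemma exists_lt_of_gt (σ : Equiv.Perm (Fin n)) (a : Fin n) (ha : a < σ a) :
    ∃ i, i ≠ a ∧ σ i < i := by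
  by_contra hcon
  push_neg at hcon
  have : (1 : Equiv.Perm (Fin n)) = σ := by
    apply perm_eq_of_le
    intro i
    by_cases hia : i = a
    · subst hia; exact le_of_lt ha
    · exact hcon i hia
  rw [← this] at ha; exact lt_irrefl _ ha

lemma exists_gt_of_lt (σ : Equiv.Perm (Fin n)) (a : Fin n) (ha : σ a < a) :
    ∃ i, i ≠ a ∧ i < σ i := by
  obtain ⟨i, hi, hlt⟩ := exists_lt_of_gt σ⁻¹ (σ a) (by simpa using ha)
  refine ⟨σ⁻¹ i, ?_, ?_⟩
  · intro hc; apply hi; rw [← hc]; simp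
  · have := hlt; simpa using this

lemma norm_sign_smul (σ : Equiv.Perm (Fin n)) (x : ℚ_[p]) : ‖Equiv.Perm.sign σ • x‖ = ‖x‖ := by
  rcases Int.units_eq_one_or (Equiv.Perm.sign σ) with h | h <;>
    simp [h, Units.smul_def, norm_neg]

lemma norm_prod_le_one {f : Fin n → ℚ_[p]} (h1 : ∀ i, ‖f i‖ ≤ 1) : ‖∏ i, f i‖ ≤ 1 := by
  rw [norm_prod]
  exact Finset.prod_le_one (fun i _ => norm_nonneg _) (fun i _ => h1 i)

lemma norm_prod_le_single {f : Fin n → ℚ_[p]} (i₀ : Fin n) {c : ℝ} (hc : 0 ≤ c)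
    (h1 : ∀ i, ‖f i‖ ≤ 1) (h : ‖f i₀‖ ≤ c) : ‖∏ i, f i‖ ≤ c := by
  rw [norm_prod, ← Finset.mul_prod_erase Finset.univ _ (Finset.mem_univ i₀)]
  calc ‖f i₀‖ * ∏ i ∈ Finset.univ.erase i₀, ‖f i‖
      ≤ c * 1 := by
        apply mul_le_mul h (Finset.prod_le_one (fun i _ => norm_nonneg _) (fun i _ => h1 i))
          (Finset.prod_nonneg (fun i _ => norm_nonneg _)) hc
    _ = c := mul_one c

lemma norm_det_le_one {A : Matrix (Fin n) (Fin n) ℚ_[p]} (h : ∀ i j, ‖A i j‖ ≤ 1) :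
    ‖A.det‖ ≤ 1 := by
  rw [Matrix.det_apply]
  apply IsUltrametricDist.norm_sum_le_of_forall_le_of_nonneg zero_le_one
  intro σ _
  rw [norm_sign_smul]
  exact norm_prod_le_one (fun i => h _ _)

lemma norm_det_le_col {A : Matrix (Fin n) (Fin n) ℚ_[p]} (c : Fin n) {C : ℝ} (hC : 0 ≤ C)
    (h : ∀ i j, ‖A i j‖ ≤ 1) (hc : ∀ i, ‖A i c‖ ≤ C) : ‖A.det‖ ≤ C := by
  rw [Matrix.det_apply]
  apply IsUltrametricDist.norm_sum_le_of_forall_le_of_nonneg hC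
  intro σ _
  rw [norm_sign_smul]
  exact norm_prod_le_single c hC (fun i => h _ _) (hc _)

/-- Determinant of an upper triangular unipotent matrix is 1. -/
lemma det_unip {A : Matrix (Fin n) (Fin n) ℚ_[p]} (hd : ∀ i, A i i = 1)
    (hl : ∀ i j : Fin n, j < i → A i j = 0) : A.det = 1 := by
  have : A.BlockTriangular id := fun i j hij => hl i j hij
  rw [Matrix.det_of_upperTriangular this]
  simp [hd]

end IwahoriAux
namespace IwahoriAux

open Matrix Pointwise

variable {p : ℕ} [Fact p.Prime] {n : ℕ}

lemma hp1 : (1:ℝ) < (p:ℝ) := by exact_mod_cast (Fact.out : p.Prime).one_lt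
lemma hp0 : (0:ℝ) < (p:ℝ) := lt_trans one_pos hp1
lemma hpinv_lt_one : (p:ℝ)⁻¹ < 1 := by
  rw [inv_lt_one_iff₀]; right; exact hp1
lemma hpinv_nonneg : (0:ℝ) ≤ (p:ℝ)⁻¹ := inv_nonneg.mpr (le_of_lt hp0)
lemma hpinv_le_one : (p:ℝ)⁻¹ ≤ 1 := le_of_lt hpinv_lt_one

/-- Padic discreteness: norm < 1 implies norm ≤ 1/p. -/
lemma norm_le_pinv_of_lt_one {x : ℚ_[p]} (h : ‖x‖ < 1) : ‖x‖ ≤ (p:ℝ)⁻¹ := by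
  have := (Padic.norm_le_pow_iff_norm_lt_pow_add_one x (-1)).2 (by simpa using h)
  simpa [_root_.zpow_neg, zpow_one] using this

lemma coe_mul (g h : GL (Fin n) ℚ_[p]) : Mv (g * h) = Mv g * Mv h := rfl
lemma coe_inv (g : GL (Fin n) ℚ_[p]) : Mv g⁻¹ = (Mv g)⁻¹ := by
  exact Matrix.coe_units_inv g
lemma coe_one : Mv (1 : GL (Fin n) ℚ_[p]) = 1 := rfl

lemma det_unit {g : GL (Fin n) ℚ_[p]} (hg : g ∈ Kgp p n) : (Mv g).det ≠ 0 := by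
  intro h
  have := hg.2
  rw [h] at this; simp at this

/-- Kgp is closed under multiplication. -/
lemma Kgp.mul_mem {g h : GL (Fin n) ℚ_[p]} (hg : g ∈ Kgp p n) (hh : h ∈ Kgp p n) :
    g * h ∈ Kgp p n := by
  constructor
  · intro i j
    rw [Units.val_mul, Matrix.mul_apply]
    apply IsUltrametricDist.norm_sum_le_of_forall_le_of_nonneg zero_le_one
    intro c _
    calc ‖Mv g i c * Mv h c j‖ = ‖Mv g i c‖ * ‖Mv h c j‖ := norm_mul _ _
      _ ≤ 1 * 1 := mul_le_mul (hg.1 _ _) (hh.1 _ _) (norm_nonneg _) zero_le_one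
      _ = 1 := mul_one 1
  · rw [Units.val_mul, Matrix.det_mul, norm_mul, hg.2, hh.2, mul_one]

lemma Kgp.one_mem : (1 : GL (Fin n) ℚ_[p]) ∈ Kgp p n := by
  constructor
  · intro i j
    rw [Units.val_one, Matrix.one_apply]
    split <;> simp
  · rw [Units.val_one, Matrix.det_one]; simp

lemma Kgp.inv_mem {g : GL (Fin n) ℚ_[p]} (hg : g ∈ Kgp p n) : g⁻¹ ∈ Kgp p n := by
  have hdet : ‖(Mv g⁻¹).det‖ = 1 := by
    have h1 : (Mv g⁻¹).det * (Mv g).det = 1 := by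
      rw [← Matrix.det_mul, ← Units.val_mul, inv_mul_cancel, Units.val_one, Matrix.det_one]
    have := congrArg norm h1
    rw [norm_mul, hg.2, mul_one, norm_one] at this
    exact this
  refine ⟨?_, hdet⟩
  intro i j
  rw [Matrix.coe_units_inv, Matrix.inv_def, Matrix.smul_apply, smul_eq_mul, norm_mul]
  have hadj : ‖(Mv g).adjugate i j‖ ≤ 1 := by
    rw [Matrix.adjugate_apply]
    apply norm_det_le_one
    intro a b
    rw [Matrix.updateRow_apply]
    split
    · by_cases hb : b = i <;> simp [Pi.single_apply, hb]
    · exact hg.1 _ _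
  have hri : ‖Ring.inverse (Mv g).det‖ = 1 := by
    rw [Ring.inverse_eq_inv, norm_inv, hg.2]; norm_num
  calc ‖Ring.inverse (Mv g).det‖ * ‖(Mv g).adjugate i j‖ = ‖(Mv g).adjugate i j‖ := by
        rw [hri, one_mul]
    _ ≤ 1 := hadj

lemma Uplus.one_mem : (1 : GL (Fin n) ℚ_[p]) ∈ Uplus p n := by
  constructor
  · intro i; rw [Units.val_one, Matrix.one_apply_eq]
  · intro i j hij; rw [Units.val_one, Matrix.one_apply_ne (Fin.ne_of_gt hij)]

lemma Uplus.mul_mem {g h : GL (Fin n) ℚ_[p]} (hg : g ∈ Uplus p n) (hh : h ∈ Uplus p n) :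
    g * h ∈ Uplus p n := by
  constructor
  · intro i
    rw [Units.val_mul, Matrix.mul_apply]
    rw [Finset.sum_eq_single i]
    · rw [hg.1, hh.1, one_mul]
    · intro c _ hc
      rcases lt_or_gt_of_ne hc with hlt | hgt
      · rw [hg.2 i c hlt, zero_mul]
      · rw [hh.2 c i hgt, mul_zero]
    · intro habs; exact absurd (Finset.mem_univ i) habs
  · intro i j hij
    rw [Units.val_mul, Matrix.mul_apply]
    apply Finset.sum_eq_zero
    intro c _
    rcases lt_or_ge c i with hci | hic
    · rw [hg.2 i c hci, zero_mul]
    · have : j < c := lt_of_lt_of_le hij hic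
      rw [hh.2 c j this, mul_zero]

lemma Uplus.det_eq_one {g : GL (Fin n) ℚ_[p]} (hg : g ∈ Uplus p n) : (Mv g).det = 1 :=
  det_unip hg.1 hg.2

lemma Uplus.inv_mem {g : GL (Fin n) ℚ_[p]} (hg : g ∈ Uplus p n) : g⁻¹ ∈ Uplus p n := by
  have hcoe' : (↑(g⁻¹) : Matrix (Fin n) (Fin n) ℚ_[p]) = (Mv g).adjugate := by
    rw [Matrix.coe_units_inv, Matrix.inv_def, Uplus.det_eq_one hg, Ring.inverse_one, one_smul]
  constructor
  · intro i
    rw [hcoe', Matrix.adjugate_apply]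
    apply det_unip
    · intro a
      rw [Matrix.updateRow_apply]
      split
      · next h => subst h; simp [Pi.single_apply]
      · exact hg.1 a
    · intro a b hba
      rw [Matrix.updateRow_apply]
      split
      · next h => subst h; simp [Pi.single_apply, Fin.ne_of_lt hba]
      · exact hg.2 a b hba
  · intro a b hba
    rw [hcoe', Matrix.adjugate_apply, Matrix.det_apply]
    apply Finset.sum_eq_zero
    intro σ _
    rcases eq_or_ne (σ a) b with hσa | hσa
    · obtain ⟨i, hia, hlt⟩ := exists_gt_of_lt σ a (by rw [hσa]; exact hba)
      have hzero : (Mv g).updateRow b (Pi.single a 1) (σ i) i = 0 := by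
        rw [Matrix.updateRow_apply]
        have : σ i ≠ b := by
          intro hc; apply hia
          have := σ.injective (hσa.trans hc.symm)
          exact this.symm
        rw [if_neg this]
        exact hg.2 (σ i) i hlt
      rw [show (∏ i, (Mv g).updateRow b (Pi.single a 1) (σ i) i) =
        0 from Finset.prod_eq_zero (Finset.mem_univ i) hzero]
      simp
    · have hzero : (Mv g).updateRow b (Pi.single a 1) (σ (σ⁻¹ b)) (σ⁻¹ b) = 0 := by
        rw [show σ (σ⁻¹ b) = b from σ.apply_symm_apply b, Matrix.updateRow_self, Pi.single_apply]
        have : σ⁻¹ b ≠ a := by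
          intro hc; apply hσa; rw [← hc]; simp
        rw [if_neg this]
      rw [show (∏ i, (Mv g).updateRow b (Pi.single a 1) (σ i) i) =
        0 from Finset.prod_eq_zero (Finset.mem_univ (σ⁻¹ b)) hzero]
      simp

end IwahoriAux
namespace IwahoriAux

open Matrix Pointwise

variable {p : ℕ} [Fact p.Prime] {n : ℕ}

lemma Iminus.one_mem : (1 : GL (Fin n) ℚ_[p]) ∈ Iminus p n := by
  refine ⟨Kgp.one_mem, ?_⟩
  intro i j hij
  rw [Units.val_one, Matrix.one_apply_ne (Fin.ne_of_lt hij)]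
  simp [hpinv_nonneg]

lemma Iminus.mul_mem {g h : GL (Fin n) ℚ_[p]} (hg : g ∈ Iminus p n) (hh : h ∈ Iminus p n) :
    g * h ∈ Iminus p n := by
  refine ⟨Kgp.mul_mem hg.1 hh.1, ?_⟩
  intro i j hij
  rw [Units.val_mul, Matrix.mul_apply]
  apply IsUltrametricDist.norm_sum_le_of_forall_le_of_nonneg hpinv_nonneg
  intro c _
  rw [norm_mul]
  rcases lt_or_ge i c with hic | hci
  · calc ‖Mv g i c‖ * ‖Mv h c j‖ ≤ (p:ℝ)⁻¹ * 1 :=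
        mul_le_mul (hg.2 i c hic) (hh.1.1 c j) (norm_nonneg _) hpinv_nonneg
      _ = (p:ℝ)⁻¹ := mul_one _
  · have hcj : c < j := lt_of_le_of_lt hci hij
    calc ‖Mv g i c‖ * ‖Mv h c j‖ ≤ 1 * (p:ℝ)⁻¹ :=
        mul_le_mul (hg.1.1 i c) (hh.2 c j hcj) (norm_nonneg _) zero_le_one
      _ = (p:ℝ)⁻¹ := one_mul _

lemma Iminus.inv_mem {g : GL (Fin n) ℚ_[p]} (hg : g ∈ Iminus p n) : g⁻¹ ∈ Iminus p n := by
  refine ⟨Kgp.inv_mem hg.1, ?_⟩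
  intro a b hab
  rw [Matrix.coe_units_inv, Matrix.inv_def, Matrix.smul_apply, smul_eq_mul, norm_mul]
  have hri : ‖Ring.inverse (Mv g).det‖ = 1 := by
    rw [Ring.inverse_eq_inv, norm_inv, hg.1.2]; norm_num
  rw [hri, one_mul, Matrix.adjugate_apply, Matrix.det_apply]
  apply IsUltrametricDist.norm_sum_le_of_forall_le_of_nonneg hpinv_nonneg
  intro σ _
  rw [norm_sign_smul]
  have hent : ∀ i, ‖(Mv g).updateRow b (Pi.single a 1) (σ i) i‖ ≤ 1 := by
    intro i
    rw [Matrix.updateRow_apply]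
    split
    · by_cases hia : i = a <;> simp [Pi.single_apply, hia]
    · exact hg.1.1 _ _
  rcases eq_or_ne (σ a) b with hσa | hσa
  · obtain ⟨i, hia, hlt⟩ := exists_lt_of_gt σ a (by rw [hσa] at *; exact hσa ▸ hab)
    apply norm_prod_le_single i hpinv_nonneg hent
    have : σ i ≠ b := fun hc => hia (σ.injective (hσa.trans hc.symm)).symm
    rw [Matrix.updateRow_apply, if_neg this]
    exact hg.2 (σ i) i hlt
  · apply norm_prod_le_single (σ⁻¹ b) hpinv_nonneg hent
    rw [show σ (σ⁻¹ b) = b from σ.apply_symm_apply b, Matrix.updateRow_self, Pi.single_apply]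
    have : σ⁻¹ b ≠ a := by intro hc; apply hσa; rw [← hc]; simp
    rw [if_neg this]
    simp [hpinv_nonneg]

/-- Diagonal entries of an element of `I⁻` are units. -/
lemma Iminus.diag_norm {g : GL (Fin n) ℚ_[p]} (hg : g ∈ Iminus p n) (a : Fin n) :
    ‖Mv g a a‖ = 1 := by
  set D : ℚ_[p] := ∏ i, Mv g i i with hD
  have hDle : ‖D‖ ≤ 1 := norm_prod_le_one (fun i => hg.1.1 i i)
  have hrest : ‖(Mv g).det - D‖ ≤ (p:ℝ)⁻¹ := by
    rw [Matrix.det_apply]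
    rw [← Finset.add_sum_erase Finset.univ _ (Finset.mem_univ (1 : Equiv.Perm (Fin n)))]
    have h1 : (Equiv.Perm.sign (1 : Equiv.Perm (Fin n))) • ∏ i, Mv g ((1 : Equiv.Perm (Fin n)) i) i = D := by
      simp [hD]
    rw [h1, add_sub_cancel_left]
    apply IsUltrametricDist.norm_sum_le_of_forall_le_of_nonneg hpinv_nonneg
    intro σ hσ
    have hσ1 : σ ≠ 1 := (Finset.mem_erase.mp hσ).1
    rw [norm_sign_smul]
    have : ∃ i, σ i < i := by
      by_contra hcon
      push_neg at hcon
      exact hσ1 (perm_eq_of_le 1 σ (fun i => by simpa using hcon i)).symm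
    obtain ⟨i, hi⟩ := this
    exact norm_prod_le_single i hpinv_nonneg (fun j => hg.1.1 _ _) (hg.2 _ _ hi)
  have hDnorm : ‖D‖ = 1 := by
    have hdet1 : ‖(Mv g).det‖ = 1 := hg.1.2
    have : (Mv g).det = ((Mv g).det - D) + D := by ring
    by_contra hne
    have hlt : ‖D‖ < 1 := lt_of_le_of_ne hDle hne
    have hmax : ‖((Mv g).det - D) + D‖ ≤ max ‖(Mv g).det - D‖ ‖D‖ :=
      Padic.nonarchimedean _ _
    rw [← this] at hmax
    have := hmax
    rw [hdet1] at this
    rcases max_cases ‖(Mv g).det - D‖ ‖D‖ with ⟨heq, _⟩ | ⟨heq, _⟩ <;> rw [heq] at this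
    · exact absurd (lt_of_le_of_lt (le_trans this hrest) hpinv_lt_one) (lt_irrefl 1)
    · exact absurd (lt_of_le_of_lt this hlt) (lt_irrefl 1)
  -- now each diagonal entry has norm 1
  have hprod : ∏ i, ‖Mv g i i‖ = 1 := by
    rw [← norm_prod]; exact hDnorm
  by_contra hne
  have hlt : ‖Mv g a a‖ < 1 := lt_of_le_of_ne (hg.1.1 a a) hne
  have : ∏ i, ‖Mv g i i‖ < 1 := by
    rw [← Finset.mul_prod_erase Finset.univ _ (Finset.mem_univ a)]
    rcases eq_or_lt_of_le (show (0:ℝ) ≤ ‖Mv g a a‖ from norm_nonneg _) with h0 | h0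
    · rw [← h0, zero_mul]; exact one_pos
    · calc ‖Mv g a a‖ * ∏ i ∈ Finset.univ.erase a, ‖Mv g i i‖
          ≤ ‖Mv g a a‖ * 1 :=
            mul_le_mul_of_nonneg_left
              (Finset.prod_le_one (fun i _ => norm_nonneg _) (fun i _ => hg.1.1 i i))
              (norm_nonneg _)
        _ = ‖Mv g a a‖ := mul_one _
        _ < 1 := hlt
  rw [hprod] at this
  exact lt_irrefl _ this

end IwahoriAux
namespace IwahoriAux

open Matrix Pointwise

variable {p : ℕ} [Fact p.Prime] {n : ℕ}

lemma permGL_mul_coe (w : Equiv.Perm (Fin n)) (g : GL (Fin n) ℚ_[p]) :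
    (permGL p n w * g).val = g.val.submatrix (w⁻¹ : Equiv.Perm (Fin n)) id := by
  show (w⁻¹ : Equiv.Perm (Fin n)).toPEquiv.toMatrix * g.val = _
  exact PEquiv.toMatrix_toPEquiv_mul _ _

lemma mul_permGL_coe (w : Equiv.Perm (Fin n)) (g : GL (Fin n) ℚ_[p]) :
    (g * permGL p n w).val = g.val.submatrix id ((w⁻¹ : Equiv.Perm (Fin n)).symm) := by
  show g.val * (w⁻¹ : Equiv.Perm (Fin n)).toPEquiv.toMatrix = _
  exact PEquiv.mul_toMatrix_toPEquiv _ _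

lemma permGL_mul_apply (w : Equiv.Perm (Fin n)) (g : GL (Fin n) ℚ_[p]) (i j : Fin n) :
    (permGL p n w * g).val i j = g.val (w⁻¹ i) j := by
  rw [permGL_mul_coe]; rfl

lemma mul_permGL_apply (w : Equiv.Perm (Fin n)) (g : GL (Fin n) ℚ_[p]) (i j : Fin n) :
    (g * permGL p n w).val i j = g.val i (w j) := by
  rw [mul_permGL_coe]; rfl

lemma permGL_inv (w : Equiv.Perm (Fin n)) : permGL p n w⁻¹ = (permGL p n w)⁻¹ := by
  apply Units.ext
  show ((w⁻¹)⁻¹).permMatrix ℚ_[p] = (permGL p n w).inv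
  rw [inv_inv]
  rfl

lemma permGL_apply (w : Equiv.Perm (Fin n)) (i j : Fin n) :
    (permGL p n w).val i j = if w⁻¹ i = j then 1 else 0 := by
  show (w⁻¹).permMatrix ℚ_[p] i j = _
  simp [Equiv.Perm.permMatrix, PEquiv.toMatrix_apply, Equiv.toPEquiv_apply]

lemma permGL_mem_Kgp (w : Equiv.Perm (Fin n)) : permGL p n w ∈ Kgp p n := by
  constructor
  · intro i j
    show ‖(permGL p n w).val i j‖ ≤ 1
    rw [permGL_apply]
    split <;> simp
  · show ‖((permGL p n w).val).det‖ = 1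
    have : (permGL p n w).val = (w⁻¹).permMatrix ℚ_[p] := rfl
    rw [this, Matrix.det_permutation]
    rcases Int.units_eq_one_or (Equiv.Perm.sign w⁻¹) with h | h <;> simp [h]

lemma piPow_coe (μ : Fin n → ℤ) :
    (piPow p n μ).val = diagonal (fun i => (p : ℚ_[p]) ^ (μ i)) := rfl

lemma piPow_inv (μ : Fin n → ℤ) : (piPow p n μ)⁻¹ = piPow p n (-μ) := by
  apply Units.ext
  show (piPow p n μ).inv = diagonal (fun i => (p : ℚ_[p]) ^ ((-μ) i))
  rfl

lemma piPow_mul_apply (μ : Fin n → ℤ) (g : GL (Fin n) ℚ_[p]) (i j : Fin n) :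
    (piPow p n μ * g).val i j = (p : ℚ_[p]) ^ (μ i) * g.val i j := by
  show (diagonal (fun i => (p : ℚ_[p]) ^ (μ i)) * g.val) i j = _
  rw [Matrix.diagonal_mul]

lemma mul_piPow_apply (μ : Fin n → ℤ) (g : GL (Fin n) ℚ_[p]) (i j : Fin n) :
    (g * piPow p n μ).val i j = g.val i j * (p : ℚ_[p]) ^ (μ j) := by
  show (g.val * diagonal (fun i => (p : ℚ_[p]) ^ (μ i))) i j = _
  rw [Matrix.mul_diagonal]

lemma pq_ne_zero : ((p : ℚ_[p])) ≠ 0 :=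
  Nat.cast_ne_zero.mpr (Fact.out : p.Prime).ne_zero

/-- Conjugation of `U⁺` by `π^μ` stays in `U⁺`. -/
lemma Uplus.conj_piPow {u : GL (Fin n) ℚ_[p]} (hu : u ∈ Uplus p n) (μ : Fin n → ℤ) :
    piPow p n μ * u * (piPow p n μ)⁻¹ ∈ Uplus p n := by
  rw [piPow_inv]
  constructor
  · intro i
    show (piPow p n μ * u * piPow p n (-μ)).val i i = 1
    rw [mul_piPow_apply, piPow_mul_apply, hu.1 i]
    rw [mul_one, ← zpow_add₀ pq_ne_zero]
    simp
  · intro i j hij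
    show (piPow p n μ * u * piPow p n (-μ)).val i j = 0
    rw [mul_piPow_apply, piPow_mul_apply, hu.2 i j hij]
    ring

/-- A set of `GL n ℚ_p` closed under the group operations. -/
def IsSg (S : Set (GL (Fin n) ℚ_[p])) : Prop :=
  (1 : GL (Fin n) ℚ_[p]) ∈ S ∧ (∀ {a b}, a ∈ S → b ∈ S → a * b ∈ S) ∧ (∀ {a}, a ∈ S → a⁻¹ ∈ S)

lemma isSg_Kgp : IsSg (Kgp p n) := ⟨Kgp.one_mem, fun h1 h2 => Kgp.mul_mem h1 h2, fun h => Kgp.inv_mem h⟩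
lemma isSg_Uplus : IsSg (Uplus p n) := ⟨Uplus.one_mem, fun h1 h2 => Uplus.mul_mem h1 h2, fun h => Uplus.inv_mem h⟩
lemma isSg_Iminus : IsSg (Iminus p n) := ⟨Iminus.one_mem, fun h1 h2 => Iminus.mul_mem h1 h2, fun h => Iminus.inv_mem h⟩

lemma mem_coset_iff {S : Set (GL (Fin n) ℚ_[p])} {g x : GL (Fin n) ℚ_[p]} :
    x ∈ S * {g} ↔ ∃ s ∈ S, s * g = x := by
  rw [Set.mul_singleton]
  exact Set.mem_image _ _ _

lemma mem_coset_self {S : Set (GL (Fin n) ℚ_[p])} (hS : IsSg S) (g : GL (Fin n) ℚ_[p]) :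
    g ∈ S * {g} :=
  mem_coset_iff.mpr ⟨1, hS.1, one_mul g⟩

lemma coset_eq {S : Set (GL (Fin n) ℚ_[p])} (hS : IsSg S) {g g' : GL (Fin n) ℚ_[p]}
    (h : g' * g⁻¹ ∈ S) : S * {g'} = S * {g} := by
  ext x
  rw [mem_coset_iff, mem_coset_iff]
  constructor
  · rintro ⟨s, hs, rfl⟩
    exact ⟨s * (g' * g⁻¹), hS.2.1 hs h, by group⟩
  · rintro ⟨s, hs, rfl⟩
    exact ⟨s * (g' * g⁻¹)⁻¹, hS.2.1 hs (hS.2.2 h), by group⟩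

lemma coset_eq_iff {S : Set (GL (Fin n) ℚ_[p])} (hS : IsSg S) {g g' : GL (Fin n) ℚ_[p]} :
    S * {g'} = S * {g} ↔ g' * g⁻¹ ∈ S := by
  constructor
  · intro h
    have hmem : g' ∈ S * {g} := h ▸ mem_coset_self hS g'
    obtain ⟨s, hs, hy⟩ := mem_coset_iff.mp hmem
    have : g' * g⁻¹ = s := by rw [← hy]; group
    rw [this]; exact hs
  · exact coset_eq hS

lemma mem_triple {A B : Set (GL (Fin n) ℚ_[p])} {a x : GL (Fin n) ℚ_[p]} :
    x ∈ A * {a} * B ↔ ∃ k ∈ A, ∃ u ∈ B, x = k * a * u := by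
  constructor
  · rintro ⟨y, hy, u, hu, rfl⟩
    obtain ⟨k, hk, rfl⟩ := mem_coset_iff.mp hy
    exact ⟨k, hk, u, hu, rfl⟩
  · rintro ⟨k, hk, u, hu, rfl⟩
    exact ⟨k * a, mem_coset_iff.mpr ⟨k, hk, rfl⟩, u, hu, rfl⟩

end IwahoriAux
namespace IwahoriAux

open Matrix Pointwise

variable {p : ℕ} [Fact p.Prime] {n : ℕ}

/-- State of the Gaussian elimination after processing the first `m` columns. -/
def Elim (p : ℕ) [Fact p.Prime] (n m : ℕ) (N : GL (Fin n) ℚ_[p]) (f : Fin n → Fin n) : Prop :=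
  N ∈ Kgp p n ∧
  (∀ j₁ j₂ : Fin n, (j₁ : ℕ) < m → (j₂ : ℕ) < m → f j₁ = f j₂ → j₁ = j₂) ∧
  (∀ j' j : Fin n, (j' : ℕ) < m → j' < j → N.val (f j') j = 0) ∧
  (∀ j : Fin n, (j : ℕ) < m → ∀ a : Fin n, a < f j → ‖N.val a j‖ ≤ (p : ℝ)⁻¹)

/-- The matrix with a single nonzero row `c0`, filled with `β`. -/
noncomputable def rowMat (c0 : Fin n) (β : Fin n → ℚ_[p]) : Matrix (Fin n) (Fin n) ℚ_[p] :=
  Matrix.of fun c j => if c = c0 then β j else 0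

lemma rowMat_mul_rowMat (c0 : Fin n) (β γ : Fin n → ℚ_[p]) (hβ : β c0 = 0) :
    rowMat c0 β * rowMat c0 γ = 0 := by
  ext a b
  simp only [Matrix.mul_apply, rowMat, Matrix.of_apply, Matrix.zero_apply]
  rw [Finset.sum_eq_single c0]
  · split
    · rw [hβ, zero_mul]
    · rw [zero_mul]
  · intro c _ hc
    rw [if_neg hc, mul_zero]
  · intro h; exact absurd (Finset.mem_univ c0) h

lemma one_add_rowMat_mul (c0 : Fin n) (β : Fin n → ℚ_[p]) (hβ : β c0 = 0) :
    (1 + rowMat c0 β) * (1 + rowMat c0 (-β)) = 1 := by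
  have h2 : rowMat c0 (-β) = -(rowMat c0 β) := by
    ext a b; simp [rowMat]; split <;> simp
  rw [h2, mul_add, add_mul, add_mul, mul_one, one_mul, mul_neg,
    rowMat_mul_rowMat c0 β β hβ]
  rw [mul_one]
  abel

/-- The clearing matrix as an element of GL. -/
noncomputable def clearGL (c0 : Fin n) (β : Fin n → ℚ_[p]) (hβ : β c0 = 0) : GL (Fin n) ℚ_[p] where
  val := 1 + rowMat c0 β
  inv := 1 + rowMat c0 (-β)
  val_inv := one_add_rowMat_mul c0 β hβ
  inv_val := by
    have := one_add_rowMat_mul c0 (-β) (by simp [hβ])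
    simpa using this

lemma clearGL_mem_Uplus (c0 : Fin n) (β : Fin n → ℚ_[p]) (hβ : β c0 = 0)
    (hupper : ∀ j, j ≤ c0 → β j = 0) : clearGL c0 β hβ ∈ Uplus p n := by
  constructor
  · intro i
    show (1 + rowMat c0 β) i i = 1
    simp only [Matrix.add_apply, Matrix.one_apply_eq, rowMat, Matrix.of_apply]
    split
    · next h => subst h; rw [hβ, add_zero]
    · rw [add_zero]
  · intro i j hij
    show (1 + rowMat c0 β) i j = 0
    simp only [Matrix.add_apply, rowMat, Matrix.of_apply]
    rw [Matrix.one_apply_ne (Fin.ne_of_gt hij)]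
    split
    · next h => subst h; rw [hupper j (le_of_lt hij), add_zero]
    · rw [add_zero]

lemma clearGL_mem_Kgp (c0 : Fin n) (β : Fin n → ℚ_[p]) (hβ : β c0 = 0)
    (hupper : ∀ j, j ≤ c0 → β j = 0) (hnorm : ∀ j, ‖β j‖ ≤ 1) :
    clearGL c0 β hβ ∈ Kgp p n := by
  constructor
  · intro i j
    show ‖(1 + rowMat c0 β) i j‖ ≤ 1
    simp only [Matrix.add_apply, rowMat, Matrix.of_apply]
    rcases eq_or_ne i j with rfl | hij
    · rw [Matrix.one_apply_eq]
      split
      · next h => subst h; rw [hβ, add_zero]; norm_num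
      · rw [add_zero]; norm_num
    · rw [Matrix.one_apply_ne hij, zero_add]
      split
      · exact hnorm j
      · norm_num
  · rw [show ((clearGL c0 β hβ).val).det = 1 from
      Uplus.det_eq_one (clearGL_mem_Uplus c0 β hβ hupper)]
    norm_num

lemma mul_clearGL_apply (N : GL (Fin n) ℚ_[p]) (c0 : Fin n) (β : Fin n → ℚ_[p])
    (hβ : β c0 = 0) (a j : Fin n) :
    (N * clearGL c0 β hβ).val a j = N.val a j + N.val a c0 * β j := by
  show (N.val * (1 + rowMat c0 β)) a j = _
  rw [mul_add, mul_one, Matrix.add_apply]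
  congr 1
  simp only [Matrix.mul_apply, rowMat, Matrix.of_apply]
  rw [Finset.sum_eq_single c0]
  · rw [if_pos rfl]
  · intro c _ hc; rw [if_neg hc, mul_zero]
  · intro h; exact absurd (Finset.mem_univ c0) h

/-- One step of the elimination. -/
lemma elim_step {m : ℕ} (hm : m < n) {N : GL (Fin n) ℚ_[p]} {f : Fin n → Fin n}
    (h : Elim p n m N f) :
    ∃ (N' : GL (Fin n) ℚ_[p]) (f' : Fin n → Fin n) (u : GL (Fin n) ℚ_[p]),
      u ∈ Uplus p n ∧ N' = N * u ∧ Elim p n (m + 1) N' f' := by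
  classical
  set cm : Fin n := ⟨m, hm⟩ with hcm
  set S : Finset (Fin n) :=
    Finset.univ.filter (fun r => (∀ j' : Fin n, (j' : ℕ) < m → f j' ≠ r) ∧ ‖N.val r cm‖ = 1)
    with hSdef
  have hS : S.Nonempty := by
    by_contra hempty
    rw [Finset.not_nonempty_iff_eq_empty] at hempty
    have hcol : ∀ a : Fin n, ‖N.val a cm‖ ≤ (p : ℝ)⁻¹ := by
      intro a
      by_cases hused : ∃ j' : Fin n, (j' : ℕ) < m ∧ f j' = a
      · obtain ⟨j', hj', rfl⟩ := hused
        rw [h.2.2.1 j' cm hj' (by rw [Fin.lt_def]; exact hj')]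
        simp [hpinv_nonneg]
      · push_neg at hused
        have hnotS : a ∉ S := by rw [hempty]; exact Finset.notMem_empty a
        rw [hSdef, Finset.mem_filter] at hnotS
        push_neg at hnotS
        have hne : ‖N.val a cm‖ ≠ 1 := by
          apply hnotS (Finset.mem_univ a)
          intro j' hj'
          exact hused j' hj'
        exact norm_le_pinv_of_lt_one (lt_of_le_of_ne (h.1.1 a cm) hne)
    have := norm_det_le_col cm hpinv_nonneg h.1.1 hcol
    rw [h.1.2] at this
    linarith [hpinv_lt_one (p := p)]
  set r : Fin n := S.min' hS with hr
  have hrS : r ∈ S := S.min'_mem hS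
  rw [hSdef, Finset.mem_filter] at hrS
  have hrunused : ∀ j' : Fin n, (j' : ℕ) < m → f j' ≠ r := hrS.2.1
  have hrnorm : ‖N.val r cm‖ = 1 := hrS.2.2
  have hrne : N.val r cm ≠ 0 := by
    intro hzero; rw [hzero] at hrnorm; simp at hrnorm
  set β : Fin n → ℚ_[p] := fun j => if cm < j then -(N.val r j / N.val r cm) else 0 with hβdef
  have hβ : β cm = 0 := by rw [hβdef]; simp
  have hupper : ∀ j, j ≤ cm → β j = 0 := by
    intro j hj; rw [hβdef]; simp only; rw [if_neg (not_lt.mpr hj)]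
  have hnormβ : ∀ j, ‖β j‖ ≤ 1 := by
    intro j
    rw [hβdef]
    simp only
    split
    · rw [norm_neg, norm_div, hrnorm, div_one]
      exact h.1.1 r j
    · simp
  set u : GL (Fin n) ℚ_[p] := clearGL cm β hβ with hu
  have huU : u ∈ Uplus p n := clearGL_mem_Uplus cm β hβ hupper
  have huK : u ∈ Kgp p n := clearGL_mem_Kgp cm β hβ hupper hnormβ
  set N' : GL (Fin n) ℚ_[p] := N * u with hN'
  have hentry : ∀ a j, N'.val a j = N.val a j + N.val a cm * β j := by
    intro a j; rw [hN', hu]; exact mul_clearGL_apply N cm β hβ a j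
  set f' : Fin n → Fin n := fun j => if (j : ℕ) = m then r else f j with hf'
  refine ⟨N', f', u, huU, rfl, ?_, ?_, ?_, ?_⟩
  · exact Kgp.mul_mem h.1 huK
  · -- injectivity
    intro j₁ j₂ hj₁ hj₂ heq
    rw [hf'] at heq
    simp only at heq
    rcases Nat.lt_or_ge (j₁ : ℕ) m with h1 | h1 <;> rcases Nat.lt_or_ge (j₂ : ℕ) m with h2 | h2
    · rw [if_neg (Nat.ne_of_lt h1), if_neg (Nat.ne_of_lt h2)] at heq
      exact h.2.1 j₁ j₂ h1 h2 heq
    · have h2' : (j₂ : ℕ) = m := le_antisymm (Nat.lt_succ_iff.mp hj₂) h2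
      rw [if_neg (Nat.ne_of_lt h1), if_pos h2'] at heq
      exact absurd heq (hrunused j₁ h1)
    · have h1' : (j₁ : ℕ) = m := le_antisymm (Nat.lt_succ_iff.mp hj₁) h1
      rw [if_pos h1', if_neg (Nat.ne_of_lt h2)] at heq
      exact absurd heq.symm (hrunused j₂ h2)
    · have h1' : (j₁ : ℕ) = m := le_antisymm (Nat.lt_succ_iff.mp hj₁) h1
      have h2' : (j₂ : ℕ) = m := le_antisymm (Nat.lt_succ_iff.mp hj₂) h2
      exact Fin.ext (h1'.trans h2'.symm)
  · -- cleared rows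
    intro j' j hj' hlt
    rcases Nat.lt_or_ge (j' : ℕ) m with h1 | h1
    · have hf'j : f' j' = f j' := by rw [hf']; simp only; rw [if_neg (Nat.ne_of_lt h1)]
      rw [hf'j, hentry, h.2.2.1 j' j h1 hlt,
        h.2.2.1 j' cm h1 (by rw [Fin.lt_def]; exact h1), zero_mul, add_zero]
    · have h1' : (j' : ℕ) = m := le_antisymm (Nat.lt_succ_iff.mp hj') h1
      have hf'j : f' j' = r := by rw [hf']; simp only; rw [if_pos h1']
      have hcmj : cm < j := by rw [Fin.lt_def]; show m < (j : ℕ); rw [← h1']; exact hlt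
      rw [hf'j, hentry, hβdef]
      simp only
      rw [if_pos hcmj]
      field_simp
      ring
  · -- small entries above pivots
    intro j hj a ha
    rcases Nat.lt_or_ge (j : ℕ) m with h1 | h1
    · have hf'j : f' j = f j := by rw [hf']; simp only; rw [if_neg (Nat.ne_of_lt h1)]
      have hjcm : ¬ (cm < j) := by
        rw [Fin.lt_def]; push_neg; exact le_of_lt h1
      have hβj : β j = 0 := by rw [hβdef]; simp only; rw [if_neg hjcm]
      rw [hentry, hβj, mul_zero, add_zero]
      rw [hf'j] at ha
      exact h.2.2.2 j h1 a ha
    · have h1' : (j : ℕ) = m := le_antisymm (Nat.lt_succ_iff.mp hj) h1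
      have hjcm : j = cm := Fin.ext h1'
      have hβj : β j = 0 := by rw [hjcm]; exact hβ
      rw [hentry, hβj, mul_zero, add_zero]
      have hf'j : f' j = r := by rw [hf']; simp only; rw [if_pos h1']
      rw [hf'j] at ha
      rw [hjcm]
      -- a < r : show small
      by_cases hused : ∃ j' : Fin n, (j' : ℕ) < m ∧ f j' = a
      · obtain ⟨j', hj', rfl⟩ := hused
        rw [h.2.2.1 j' cm hj' (by rw [Fin.lt_def]; exact hj')]
        simp [hpinv_nonneg]
      · push_neg at hused
        have hnotS : a ∉ S := by
          intro hmem
          have := S.min'_le a hmem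
          rw [← hr] at this
          exact absurd ha (not_lt.mpr this)
        rw [hSdef, Finset.mem_filter] at hnotS
        push_neg at hnotS
        have hne : ‖N.val a cm‖ ≠ 1 := by
          have := hnotS (Finset.mem_univ a) (fun j' hj' => hused j' hj')
          exact this
        exact norm_le_pinv_of_lt_one (lt_of_le_of_ne (h.1.1 a cm) hne)

/-- Iterating the elimination. -/
lemma elim_rec : ∀ (d m : ℕ), m + d = n → ∀ (N : GL (Fin n) ℚ_[p]) (f : Fin n → Fin n),
    Elim p n m N f →
    ∃ (N₂ : GL (Fin n) ℚ_[p]) (f₂ : Fin n → Fin n) (u : GL (Fin n) ℚ_[p]),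
      u ∈ Uplus p n ∧ N₂ = N * u ∧ Elim p n n N₂ f₂ := by
  intro d
  induction d with
  | zero =>
    intro m hmn N f h
    refine ⟨N, f, 1, Uplus.one_mem, (mul_one N).symm, ?_⟩
    have h' := h
    rwa [show m = n from by omega] at h'
  | succ d ih =>
    intro m hmn N f h
    have hm : m < n := by omega
    obtain ⟨N', f', u₀, hu₀, hN', h'⟩ := elim_step hm h
    obtain ⟨N₂, f₂, u₁, hu₁, hN₂, h₂⟩ := ih (m + 1) (by omega) N' f' h'
    exact ⟨N₂, f₂, u₀ * u₁, Uplus.mul_mem hu₀ hu₁,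
      by rw [hN₂, hN', mul_assoc], h₂⟩

/-- LPU (Bruhat over ℤ_p) decomposition: every `k ∈ K` is `i · P_w · u`. -/
lemma lpu (k : GL (Fin n) ℚ_[p]) (hk : k ∈ Kgp p n) :
    ∃ (w : Equiv.Perm (Fin n)) (i u : GL (Fin n) ℚ_[p]),
      i ∈ Iminus p n ∧ u ∈ Uplus p n ∧ k = i * permGL p n w * u := by
  have h0 : Elim p n 0 k id :=
    ⟨hk, fun j₁ j₂ h1 => absurd h1 (Nat.not_lt_zero _),
     fun j' j h1 => absurd h1 (Nat.not_lt_zero _),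
     fun j h1 => absurd h1 (Nat.not_lt_zero _)⟩
  obtain ⟨N, f, u, huU, hNk, hE⟩ := elim_rec n 0 (Nat.zero_add n) k id h0
  have hinj : Function.Injective f := by
    intro a b hab
    exact hE.2.1 a b a.isLt b.isLt hab
  have hbij : Function.Bijective f := (Finite.injective_iff_bijective).mp hinj
  set φ : Equiv.Perm (Fin n) := Equiv.ofBijective f hbij with hφ
  set L : GL (Fin n) ℚ_[p] := N * permGL p n φ.symm with hL
  have hLIm : L ∈ Iminus p n := by
    constructor
    · exact Kgp.mul_mem hE.1 (permGL_mem_Kgp φ.symm)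
    · intro a b hab
      have happly : L.val a b = N.val a (φ.symm b) := by
        rw [hL, mul_permGL_apply]
      rw [happly]
      apply hE.2.2.2 (φ.symm b) (φ.symm b).isLt a
      have : f (φ.symm b) = b := φ.apply_symm_apply b
      rw [this]
      exact hab
  refine ⟨φ, L, u⁻¹, hLIm, Uplus.inv_mem huU, ?_⟩
  have hperm : permGL p n φ.symm * permGL p n φ = 1 := by
    have h1 : (φ.symm : Equiv.Perm (Fin n)) = φ⁻¹ := rfl
    rw [h1, permGL_inv]
    exact inv_mul_cancel _
  have : L * permGL p n φ = N := by
    rw [hL, mul_assoc, hperm, mul_one]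
  rw [this, hNk, mul_assoc, mul_inv_cancel, mul_one]

end IwahoriAux
namespace IwahoriAux

open Matrix Pointwise

variable {p : ℕ} [Fact p.Prime] {n : ℕ}

lemma lam_strict {lam : Fin n → ℤ}
    (hreg : ∀ i j : Fin n, (j : ℕ) = (i : ℕ) + 1 → lam j < lam i) :
    ∀ a b : Fin n, a < b → lam b < lam a := by
  suffices H : ∀ (k : ℕ) (a b : Fin n), (b : ℕ) = (a : ℕ) + k + 1 → lam b < lam a by
    intro a b hab
    exact H ((b : ℕ) - (a : ℕ) - 1) a b (by rw [Fin.lt_def] at hab; omega)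
  intro k
  induction k with
  | zero => intro a b hab; exact hreg a b (by omega)
  | succ k ih =>
    intro a b hab
    have hc : (a : ℕ) + k + 1 < n := by have := b.isLt; omega
    set c : Fin n := ⟨(a : ℕ) + k + 1, hc⟩ with hcdef
    have h1 : lam b < lam c := hreg c b (by simp [hcdef]; omega)
    have h2 : lam c < lam a := ih a c (by simp [hcdef])
    exact lt_trans h1 h2

/-- Regularity: `π^λ K π^{-λ} ∩ K ⊆ I⁻`. -/
lemma conj_lam_mem_Iminus {lam : Fin n → ℤ}
    (hreg : ∀ i j : Fin n, (j : ℕ) = (i : ℕ) + 1 → lam j < lam i)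
    {c : GL (Fin n) ℚ_[p]} (hc : c ∈ Kgp p n)
    (hzK : piPow p n lam * c * (piPow p n lam)⁻¹ ∈ Kgp p n) :
    piPow p n lam * c * (piPow p n lam)⁻¹ ∈ Iminus p n := by
  refine ⟨hzK, ?_⟩
  intro a b hab
  rw [piPow_inv, mul_piPow_apply, piPow_mul_apply]
  have hval : ‖(p : ℚ_[p]) ^ (lam a) * c.val a b * (p : ℚ_[p]) ^ ((-lam) b)‖
      = (p : ℝ) ^ (-(lam a)) * ‖c.val a b‖ * (p : ℝ) ^ (lam b) := by
    rw [norm_mul, norm_mul, Padic.norm_p_zpow, Padic.norm_p_zpow]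
    have : (-((-lam) b)) = lam b := by simp
    rw [this]
  rw [hval]
  have hlt : lam b + 1 ≤ lam a := lam_strict hreg a b hab
  have hle : (p:ℝ) ^ (-(lam a)) * (p:ℝ) ^ (lam b) ≤ (p:ℝ)⁻¹ := by
    rw [← zpow_add₀ (ne_of_gt (hp0 (p := p)))]
    calc (p:ℝ) ^ (-(lam a) + lam b) ≤ (p:ℝ) ^ (-1 : ℤ) :=
      zpow_le_zpow_right₀ (le_of_lt (hp1 (p := p))) (by omega)
    _ = (p:ℝ)⁻¹ := by simp
  calc (p : ℝ) ^ (-(lam a)) * ‖c.val a b‖ * (p : ℝ) ^ (lam b)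
      ≤ (p : ℝ) ^ (-(lam a)) * 1 * (p : ℝ) ^ (lam b) := by
        apply mul_le_mul_of_nonneg_right _ (le_of_lt (zpow_pos (hp0 (p:=p)) _))
        exact mul_le_mul_of_nonneg_left (hc.1 a b) (le_of_lt (zpow_pos (hp0 (p:=p)) _))
    _ = (p:ℝ) ^ (-(lam a)) * (p:ℝ) ^ (lam b) := by rw [mul_one]
    _ ≤ (p:ℝ)⁻¹ := hle

/-- Injectivity part 1: two representatives of `I π^λ K` in the same `K`-coset are in the
same `I`-coset. -/
lemma inj_coset {lam : Fin n → ℤ}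
    (hreg : ∀ i j : Fin n, (j : ℕ) = (i : ℕ) + 1 → lam j < lam i)
    {g g' : GL (Fin n) ℚ_[p]}
    (hg : g ∈ Iminus p n * {piPow p n lam} * Kgp p n)
    (hg' : g' ∈ Iminus p n * {piPow p n lam} * Kgp p n)
    (hK : g' * g⁻¹ ∈ Kgp p n) : g' * g⁻¹ ∈ Iminus p n := by
  obtain ⟨i, hi, c, hc, rfl⟩ := mem_triple.mp hg
  obtain ⟨i', hi', c', hc', rfl⟩ := mem_triple.mp hg'
  have halg : (i' * piPow p n lam * c') * (i * piPow p n lam * c)⁻¹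
      = i' * (piPow p n lam * (c' * c⁻¹) * (piPow p n lam)⁻¹) * i⁻¹ := by group
  have hzK : piPow p n lam * (c' * c⁻¹) * (piPow p n lam)⁻¹ ∈ Kgp p n := by
    have : piPow p n lam * (c' * c⁻¹) * (piPow p n lam)⁻¹
        = i'⁻¹ * ((i' * piPow p n lam * c') * (i * piPow p n lam * c)⁻¹) * i := by
      rw [halg]; group
    rw [this]
    exact Kgp.mul_mem (Kgp.mul_mem (Kgp.inv_mem hi'.1) hK) hi.1
  have hzI := conj_lam_mem_Iminus hreg (Kgp.mul_mem hc' (Kgp.inv_mem hc)) hzK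
  rw [halg]
  exact Iminus.mul_mem (Iminus.mul_mem hi' hzI) (Iminus.inv_mem hi)

/-- Injectivity part 2: the permutation is determined. -/
lemma inj_perm {μ : Fin n → ℤ} {v w : Equiv.Perm (Fin n)} {g g' : GL (Fin n) ℚ_[p]}
    (hg : g ∈ Iminus p n * {permGL p n w⁻¹ * piPow p n μ} * Uplus p n)
    (hg' : g' ∈ Iminus p n * {permGL p n v⁻¹ * piPow p n μ} * Uplus p n)
    (hI : g' * g⁻¹ ∈ Iminus p n) : v = w := by
  obtain ⟨i₂, hi₂, u₂, hu₂, rfl⟩ := mem_triple.mp hg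
  obtain ⟨i₁, hi₁, u₁, hu₁, rfl⟩ := mem_triple.mp hg'
  set ut : GL (Fin n) ℚ_[p] := piPow p n μ * (u₁ * u₂⁻¹) * (piPow p n μ)⁻¹ with hut
  have hutU : ut ∈ Uplus p n := Uplus.conj_piPow (Uplus.mul_mem hu₁ (Uplus.inv_mem hu₂)) μ
  set x : GL (Fin n) ℚ_[p] :=
    i₁⁻¹ * ((i₁ * (permGL p n v⁻¹ * piPow p n μ) * u₁) *
      (i₂ * (permGL p n w⁻¹ * piPow p n μ) * u₂)⁻¹) * i₂ with hx
  have hxI : x ∈ Iminus p n :=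
    Iminus.mul_mem (Iminus.mul_mem (Iminus.inv_mem hi₁) hI) hi₂
  have hxeq : x = permGL p n v⁻¹ * (ut * permGL p n w) := by
    rw [hx, hut]
    have hw : permGL p n w = (permGL p n w⁻¹)⁻¹ := by
      rw [← permGL_inv w⁻¹, inv_inv]
    rw [hw]
    group
  have hentry : ∀ a b : Fin n, x.val a b = ut.val (v a) (w b) := by
    intro a b
    rw [hxeq]
    rw [permGL_mul_apply]
    rw [mul_permGL_apply]
    simp
  have hle : ∀ a : Fin n, v a ≤ w a := by
    intro a
    by_contra hcon
    push_neg at hcon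
    have hz : ut.val (v a) (w a) = 0 := hutU.2 (v a) (w a) hcon
    have : ‖x.val a a‖ = 1 := Iminus.diag_norm hxI a
    rw [hentry a a, hz] at this
    simp at this
  exact perm_eq_of_le v w hle

/-- Surjectivity: every `K`-coset in the intersection contains an Iwahori representative. -/
lemma surj_rep {lam μ : Fin n → ℤ} {g : GL (Fin n) ℚ_[p]}
    (hg : g ∈ (Kgp p n * {piPow p n μ} * Uplus p n) ∩ (Kgp p n * {piPow p n lam} * Kgp p n)) :
    ∃ (w : Equiv.Perm (Fin n)) (g' : GL (Fin n) ℚ_[p]),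
      g' ∈ (Iminus p n * {permGL p n w⁻¹ * piPow p n μ} * Uplus p n) ∩
        (Iminus p n * {piPow p n lam} * Kgp p n) ∧ g' * g⁻¹ ∈ Kgp p n := by
  obtain ⟨hA, hB⟩ := hg
  obtain ⟨k₁, hk₁, k₂, hk₂, hgB⟩ := mem_triple.mp hB
  obtain ⟨k, hk, u, hu, hgA⟩ := mem_triple.mp hA
  set g' : GL (Fin n) ℚ_[p] := k₁⁻¹ * g with hg'
  obtain ⟨σ, i, u₀, hi, hu₀, hlpu⟩ := lpu (k₁⁻¹ * k) (Kgp.mul_mem (Kgp.inv_mem hk₁) hk)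
  set w : Equiv.Perm (Fin n) := σ⁻¹ with hwdef
  have hσ : σ = w⁻¹ := by rw [hwdef, inv_inv]
  set ut : GL (Fin n) ℚ_[p] := (piPow p n μ)⁻¹ * u₀ * piPow p n μ with hut
  have hutU : ut ∈ Uplus p n := by
    have h1 := Uplus.conj_piPow hu₀ (-μ)
    have h2 : piPow p n (-μ) = (piPow p n μ)⁻¹ := (piPow_inv μ).symm
    rw [h2, inv_inv] at h1
    exact h1
  refine ⟨w, g', ⟨?_, ?_⟩, ?_⟩
  · apply mem_triple.mpr
    refine ⟨i, hi, ut * u, Uplus.mul_mem hutU hu, ?_⟩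
    rw [hg', hgA, hut]
    have : k₁⁻¹ * k = i * permGL p n w⁻¹ * u₀ := by rw [← hσ]; exact hlpu
    calc k₁⁻¹ * (k * piPow p n μ * u)
        = (k₁⁻¹ * k) * piPow p n μ * u := by group
      _ = (i * permGL p n w⁻¹ * u₀) * piPow p n μ * u := by rw [this]
      _ = i * (permGL p n w⁻¹ * piPow p n μ) * ((piPow p n μ)⁻¹ * u₀ * piPow p n μ * u) := by
          group
  · apply mem_triple.mpr
    refine ⟨1, Iminus.one_mem, k₂, hk₂, ?_⟩
    rw [hg', hgB]
    group
  · rw [hg']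
    have : k₁⁻¹ * g * g⁻¹ = k₁⁻¹ := by group
    rw [this]
    exact Kgp.inv_mem hk₁

/-- Well-definedness: Iwahori pieces sit inside the spherical ones. -/
lemma wd {lam μ : Fin n → ℤ} (w : Equiv.Perm (Fin n)) {g : GL (Fin n) ℚ_[p]}
    (hg : g ∈ (Iminus p n * {permGL p n w⁻¹ * piPow p n μ} * Uplus p n) ∩
      (Iminus p n * {piPow p n lam} * Kgp p n)) :
    g ∈ (Kgp p n * {piPow p n μ} * Uplus p n) ∩ (Kgp p n * {piPow p n lam} * Kgp p n) := by
  obtain ⟨h1, h2⟩ := hg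
  constructor
  · obtain ⟨i, hi, u, hu, rfl⟩ := mem_triple.mp h1
    refine mem_triple.mpr ⟨i * permGL p n w⁻¹, Kgp.mul_mem hi.1 (permGL_mem_Kgp _), u, hu, ?_⟩
    group
  · obtain ⟨i, hi, c, hc, rfl⟩ := mem_triple.mp h2
    exact mem_triple.mpr ⟨i, hi.1, c, hc, rfl⟩

end IwahoriAux
namespace IwahoriAux

open Matrix Pointwise

variable {p : ℕ} [Fact p.Prime] {n : ℕ}

/-- The comparison map from the Iwahori-level cosets to the spherical-level cosets. -/
noncomputable def Fmap (p : ℕ) [Fact p.Prime] (n : ℕ) (lam μ : Fin n → ℤ) :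
    ((w : Equiv.Perm (Fin n)) ×
      {C : Set (GL (Fin n) ℚ_[p]) //
        ∃ g ∈ (Iminus p n * {permGL p n w⁻¹ * piPow p n μ} * Uplus p n) ∩
            (Iminus p n * {piPow p n lam} * Kgp p n),
          C = Iminus p n * {g}}) →
    {C : Set (GL (Fin n) ℚ_[p]) //
      ∃ g ∈ (Kgp p n * {piPow p n μ} * Uplus p n) ∩ (Kgp p n * {piPow p n lam} * Kgp p n),
        C = Kgp p n * {g}} := fun x =>
  ⟨Kgp p n * {x.2.2.choose}, x.2.2.choose, wd x.1 x.2.2.choose_spec.1, rfl⟩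

lemma Fmap_bijective (p : ℕ) [Fact p.Prime] (n : ℕ) (lam μ : Fin n → ℤ)
    (hreg : ∀ i j : Fin n, (j : ℕ) = (i : ℕ) + 1 → lam j < lam i) :
    Function.Bijective (Fmap p n lam μ) := by
  classical
  constructor
  · rintro ⟨wx, Cx⟩ ⟨wy, Cy⟩ h
    have hx := Cx.2.choose_spec
    have hy := Cy.2.choose_spec
    have hval : Kgp p n * {Cx.2.choose} = Kgp p n * {Cy.2.choose} :=
      congrArg Subtype.val h
    have hK : Cx.2.choose * Cy.2.choose⁻¹ ∈ Kgp p n :=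
      (coset_eq_iff isSg_Kgp).mp hval
    have hI : Cx.2.choose * Cy.2.choose⁻¹ ∈ Iminus p n :=
      inj_coset hreg hy.1.2 hx.1.2 hK
    have hw : wx = wy := inj_perm hy.1.1 hx.1.1 hI
    subst hw
    have hCeq : Cx.1 = Cy.1 := by
      rw [hx.2, hy.2]
      exact coset_eq isSg_Iminus hI
    exact congrArg (Sigma.mk wx) (Subtype.ext hCeq)
  · rintro ⟨C, hC⟩
    obtain ⟨g, hg, hCeq⟩ := hC
    obtain ⟨w, g', hg', hKrel⟩ := surj_rep hg
    have prf : ∃ gg ∈ (Iminus p n * {permGL p n w⁻¹ * piPow p n μ} * Uplus p n) ∩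
        (Iminus p n * {piPow p n lam} * Kgp p n), Iminus p n * {g'} = Iminus p n * {gg} :=
      ⟨g', hg', rfl⟩
    refine ⟨⟨w, ⟨Iminus p n * {g'}, prf⟩⟩, ?_⟩
    apply Subtype.ext
    show Kgp p n * {prf.choose} = C
    have spec := prf.choose_spec
    have hI' : g' * prf.choose⁻¹ ∈ Iminus p n :=
      (coset_eq_iff isSg_Iminus).mp spec.2
    have hKrel2 : prf.choose * g⁻¹ ∈ Kgp p n := by
      have halg : prf.choose * g⁻¹ = (g' * prf.choose⁻¹)⁻¹ * (g' * g⁻¹) := by group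
      rw [halg]
      exact Kgp.mul_mem (Kgp.inv_mem hI'.1) hKrel
    rw [hCeq]
    exact coset_eq isSg_Kgp hKrel2

end IwahoriAux
open Pointwise in
/-- **Iwahori level decomposition** (Lemma 5.2, type `A_{n−1}` instance): for `λ` regular
dominant, there is a bijection between `K\(K·π^{μ}·U⁺ ∩ K·π^{λ}·K)` and the disjoint union
over `w ∈ S_n` of `I⁻\(I⁻·w⁻¹·π^{μ}·U⁺ ∩ I⁻·π^{λ}·K)`. -/
theorem iwahori_level_decomposition (p : ℕ) [Fact p.Prime] (n : ℕ) (hn : 2 ≤ n)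
    (lam μ : Fin n → ℤ)
    (hreg : ∀ i j : Fin n, (j : ℕ) = (i : ℕ) + 1 → lam j < lam i) :
    Nonempty
      ({C : Set (GL (Fin n) ℚ_[p]) //
          ∃ g ∈ (Kgp p n * {piPow p n μ} * Uplus p n) ∩ (Kgp p n * {piPow p n lam} * Kgp p n),
            C = Kgp p n * {g}} ≃
        (w : Equiv.Perm (Fin n)) ×
          {C : Set (GL (Fin n) ℚ_[p]) //
            ∃ g ∈ (Iminus p n * {permGL p n w⁻¹ * piPow p n μ} * Uplus p n) ∩
                (Iminus p n * {piPow p n lam} * Kgp p n),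
              C = Iminus p n * {g}}) := by
  exact ⟨(Equiv.ofBijective (IwahoriAux.Fmap p n lam μ)
    (IwahoriAux.Fmap_bijective p n lam μ hreg)).symm⟩
end

section
/- (Proposition 6.4(1): quadratic relation for the Demazure–Lusztig operator.) With Λ, α∨, α, s, F, v, Q(Λ), b, c and T as in the context, the F-linear operator T on Q(Λ) satisfies T ∘ T = (v − 1)·T + v·id. -/
noncomputable section

/-- The group algebra `F[Λ]` of the finitely generated free abelian group `Λ = ℤ^d`. -/
abbrev GrpAlg (F : Type) [Field F] (d : ℕ) := AddMonoidAlgebra F (Fin d → ℤ)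

/-- `Q(Λ)`, the field of fractions of the integral domain `F[Λ]`. -/
abbrev QLam (F : Type) [Field F] (d : ℕ) := FractionRing (GrpAlg F d)

/-- `e^λ`, viewed inside `Q(Λ)`. -/
def eQ (F : Type) [Field F] (d : ℕ) (lam : Fin d → ℤ) : QLam F d :=
  algebraMap (GrpAlg F d) (QLam F d) (AddMonoidAlgebra.single lam 1)

/-- The reflection `s(λ) = λ − α(λ)·α∨`, as an automorphism of `Λ`. -/
def reflE (d : ℕ) (cor : Fin d → ℤ) (al : (Fin d → ℤ) →+ ℤ) (h : al cor = 2) :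
    (Fin d → ℤ) ≃+ (Fin d → ℤ) where
  toFun x := x - al x • cor
  invFun x := x - al x • cor
  left_inv x := by
    simp only [map_sub, map_zsmul, h, smul_eq_mul]
    module
  right_inv x := by
    simp only [map_sub, map_zsmul, h, smul_eq_mul]
    module
  map_add' x y := by
    simp only [map_add]
    module

/-- The `F`-algebra automorphism of `Q(Λ)` induced by the reflection `s`. -/
def sQ (F : Type) [Field F] (d : ℕ) (cor : Fin d → ℤ) (al : (Fin d → ℤ) →+ ℤ) (h : al cor = 2) :
    QLam F d ≃+* QLam F d :=
  IsFractionRing.ringEquivOfRingEquiv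
    (AddMonoidAlgebra.domCongr F F (reflE d cor al h)).toRingEquiv

/-- `c = (1 − v·e^{α∨})/(1 − e^{α∨}) ∈ Q(Λ)`. -/
def cDL (F : Type) [Field F] (v : F) (d : ℕ) (cor : Fin d → ℤ) : QLam F d :=
  (1 - algebraMap (GrpAlg F d) (QLam F d) (AddMonoidAlgebra.single cor v)) /
    (1 - eQ F d cor)

/-- `b = (v − 1)/(1 − e^{α∨}) ∈ Q(Λ)`. -/
def bDL (F : Type) [Field F] (v : F) (d : ℕ) (cor : Fin d → ℤ) : QLam F d :=
  algebraMap (GrpAlg F d) (QLam F d) (algebraMap F (GrpAlg F d) (v - 1)) /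
    (1 - eQ F d cor)

/-- The Demazure–Lusztig operator `T(f) = c·s(f) + b·f` on `Q(Λ)`. -/
def TDL (F : Type) [Field F] (v : F) (d : ℕ) (cor : Fin d → ℤ) (al : (Fin d → ℤ) →+ ℤ)
    (h : al cor = 2) : QLam F d → QLam F d :=
  fun f => cDL F v d cor * sQ F d cor al h f + bDL F v d cor * f

end

set_option maxHeartbeats 1000000
set_option synthInstance.maxHeartbeats 200000

/-- **Proposition 6.4(1)**: the Demazure–Lusztig operator satisfies the quadratic relation
`T ∘ T = (v − 1)·T + v·id` on `Q(Λ)`. -/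
theorem demazure_lusztig_quadratic (F : Type) [Field F] (v : F) (d : ℕ)
    (cor : Fin d → ℤ) (hcor : cor ≠ 0) (al : (Fin d → ℤ) →+ ℤ) (h : al cor = 2) :
    ∀ f : QLam F d,
      TDL F v d cor al h (TDL F v d cor al h f) =
        algebraMap (GrpAlg F d) (QLam F d) (algebraMap F (GrpAlg F d) (v - 1)) *
            TDL F v d cor al h f +
          algebraMap (GrpAlg F d) (QLam F d) (algebraMap F (GrpAlg F d) v) * f := by
  intro f
  set a : GrpAlg F d →+* QLam F d := algebraMap (GrpAlg F d) (QLam F d) with ha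
  set S := sQ F d cor al h with hSdef
  set σ := (AddMonoidAlgebra.domCongr F F (reflE d cor al h)).toRingEquiv with hσ
  have hSalg : ∀ x : GrpAlg F d, S (a x) = a (σ x) := fun x =>
    IsFractionRing.ringEquivOfRingEquiv_algebraMap σ x
  have hrefl : (reflE d cor al h) cor = -cor := by
    show cor - al cor • cor = -cor
    rw [h]; module
  have hσσ : ∀ x : GrpAlg F d, σ (σ x) = x := by
    intro x
    show (AddMonoidAlgebra.domCongr F F (reflE d cor al h))
      ((AddMonoidAlgebra.domCongr F F (reflE d cor al h)) x) = x
    have : ((AddMonoidAlgebra.domCongr F F (reflE d cor al h)).symm)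
        ((AddMonoidAlgebra.domCongr F F (reflE d cor al h)) x) = x :=
      AlgEquiv.symm_apply_apply _ x
    rwa [AddMonoidAlgebra.domCongr_symm] at this
  have hSS : ∀ g : QLam F d, S (S g) = g := by
    intro g
    obtain ⟨x, y, -, rfl⟩ := IsFractionRing.div_surjective (A := GrpAlg F d) g
    rw [map_div₀, map_div₀, hSalg, hSalg, hSalg, hSalg, hσσ, hσσ]
  set X := eQ F d cor with hX
  set V := a (algebraMap F (GrpAlg F d) v) with hV
  have hXY : X * a (AddMonoidAlgebra.single (-cor) (1 : F)) = 1 := by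
    rw [hX, eQ, ← ha, ← map_mul, AddMonoidAlgebra.single_mul_single, add_neg_cancel, mul_one,
      ← AddMonoidAlgebra.one_def, map_one]
  have hX0 : X ≠ 0 := left_ne_zero_of_mul_eq_one hXY
  have hSX : S X = X⁻¹ := by
    have : S X = a (AddMonoidAlgebra.single (-cor) (1 : F)) := by
      rw [hX, eQ, ← ha, hSalg]
      congr 1
      show AddMonoidAlgebra.domCongr F F (reflE d cor al h) _ = _
      rw [AddMonoidAlgebra.domCongr_single, hrefl]
    rw [this]
    exact eq_inv_of_mul_eq_one_left (by rw [mul_comm]; exact hXY)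
  have hX1 : X ≠ 1 := by
    rw [hX, eQ]
    intro hcon
    have h1 : algebraMap (GrpAlg F d) (QLam F d) (AddMonoidAlgebra.single cor (1 : F)) =
        algebraMap (GrpAlg F d) (QLam F d) (AddMonoidAlgebra.single 0 (1 : F)) := by
      rw [hcon, ← AddMonoidAlgebra.one_def, map_one]
    have h2 := IsFractionRing.injective (GrpAlg F d) (QLam F d) h1
    rcases AddMonoidAlgebra.single_inj.mp h2 with ⟨h3, -⟩ | ⟨h3, -⟩
    · exact hcor h3
    · exact one_ne_zero h3
  have hSV : S V = V := by
    rw [hV, hSalg]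
    congr 1
    exact AlgEquiv.commutes (AddMonoidAlgebra.domCongr F F (reflE d cor al h)) v
  have hVX : a (AddMonoidAlgebra.single cor v) = V * X := by
    rw [hV, hX, eQ, ← ha, ← map_mul]
    congr 1
    simp [AddMonoidAlgebra.coe_algebraMap, AddMonoidAlgebra.single_mul_single]
  have hVsub : a (algebraMap F (GrpAlg F d) (v - 1)) = V - 1 := by
    rw [map_sub, map_sub, map_one, map_one, hV]
  have hb : bDL F v d cor = (V - 1) / (1 - X) := by rw [bDL, ← ha, hVsub, ← hX]
  have hc : cDL F v d cor = (1 - V * X) / (1 - X) := by rw [cDL, ← ha, hVX, ← hX]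
  have hSb : S (bDL F v d cor) = (V - 1) / (1 - X⁻¹) := by
    rw [hb, map_div₀, map_sub, map_sub, map_one, hSV, hSX]
  have hSc : S (cDL F v d cor) = (1 - V * X⁻¹) / (1 - X⁻¹) := by
    rw [hc, map_div₀, map_sub, map_sub, map_one, map_mul, hSV, hSX]
  have hX1' : (1 : QLam F d) - X ≠ 0 := sub_ne_zero.mpr (Ne.symm hX1)
  have hXi1 : (1 : QLam F d) - X⁻¹ ≠ 0 := by
    rw [sub_ne_zero]
    intro hcon
    exact hX1 (by rw [← inv_inv X, ← hcon, inv_one])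
  have hTf : TDL F v d cor al h f
      = (1 - V * X) / (1 - X) * S f + (V - 1) / (1 - X) * f := by
    rw [TDL, hc, hb]
  have key : TDL F v d cor al h (TDL F v d cor al h f)
      = (1 - V * X) / (1 - X) * ((1 - V * X⁻¹) / (1 - X⁻¹) * f + (V - 1) / (1 - X⁻¹) * S f)
        + (V - 1) / (1 - X) * ((1 - V * X) / (1 - X) * S f + (V - 1) / (1 - X) * f) := by
    have hSc' : S ((1 - V * X) / (1 - X)) = (1 - V * X⁻¹) / (1 - X⁻¹) := by
      rw [← hc, hSc]
    have hSb' : S ((V - 1) / (1 - X)) = (V - 1) / (1 - X⁻¹) := by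
      rw [← hb, hSb]
    conv_lhs => rw [TDL, hc, hb, hTf]
    rw [← hSdef, map_add, map_mul, map_mul, hSc', hSb', hSS f]
  have hXm1 : X - 1 ≠ 0 := sub_ne_zero.mpr hX1
  have e1 : (1 - V * X⁻¹) / (1 - X⁻¹) = (X - V) / (X - 1) := by
    rw [div_eq_div_iff hXi1 hXm1]
    field_simp
  have e2 : (V - 1) / (1 - X⁻¹) = X * (V - 1) / (X - 1) := by
    rw [div_eq_div_iff hXi1 hXm1]
    field_simp
  rw [key, hTf, hVsub, e1, e2]
  field_simp
  ring
end

section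
/- (Decomposition used in the proof of Spherical Finiteness, Section 8.2, type A_{n−1} instance.) Let λ ∈ ℤⁿ be dominant (λ_1 ≥ ⋯ ≥ λ_n) and μ ∈ ℤⁿ. Then K·π^{ξ}·U⁻ ∩ K·π^{λ}·K = ∅ unless ξ ≤ λ, and consequently K·π^{λ}·K ∩ K·π^{μ}·U⁺ = ⋃_{ξ ∈ ℤⁿ, μ ≤ ξ ≤ λ} (K·π^{ξ}·U⁻ ∩ K·π^{μ}·U⁺ ∩ K·π^{λ}·K). -/
open Matrix Pointwise

namespace SphDec
variable {p : ℕ} [Fact p.Prime] {n : ℕ}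

lemma pR_one_lt : 1 < (p : ℝ) := by exact_mod_cast (Fact.out : p.Prime).one_lt
lemma pQ_ne_zero : ((p : ℚ_[p])) ≠ 0 :=
  Nat.cast_ne_zero.mpr (Fact.out : p.Prime).ne_zero

lemma norm_sum_le_of_le {α : Type*} (s : Finset α) (f : α → ℚ_[p]) {C : ℝ}
    (hC : 0 ≤ C) (h : ∀ i ∈ s, ‖f i‖ ≤ C) : ‖∑ i ∈ s, f i‖ ≤ C := by
  classical
  induction s using Finset.induction with
  | empty => simpa using hC
  | @insert a s ha ih =>
    rw [Finset.sum_insert ha]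
    refine le_trans (Padic.nonarchimedean _ _) (max_le (h _ (Finset.mem_insert_self a s)) ?_)
    exact ih fun i hi => h i (Finset.mem_insert_of_mem hi)

lemma det_norm_le_one {m : ℕ} {A : Matrix (Fin m) (Fin m) ℚ_[p]}
    (hA : ∀ i j, ‖A i j‖ ≤ 1) : ‖A.det‖ ≤ 1 := by
  rw [Matrix.det_apply]
  refine norm_sum_le_of_le _ _ zero_le_one ?_
  intro σ _
  have h1 : ‖Equiv.Perm.sign σ • ∏ i, A (σ i) i‖ = ‖∏ i, A (σ i) i‖ := by
    rcases Int.units_eq_one_or (Equiv.Perm.sign σ) with h | h <;>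
      simp [h, Units.smul_def, norm_neg]
  rw [h1, norm_prod]
  exact Finset.prod_le_one (fun i _ => norm_nonneg _) (fun i _ => hA _ _)

lemma prod_p_zpow {α : Type*} (s : Finset α) (f : α → ℤ) :
    (∏ i ∈ s, ((p : ℚ_[p])) ^ (f i)) = (p : ℚ_[p]) ^ (∑ i ∈ s, f i) := by
  classical
  induction s using Finset.induction with
  | empty => simp
  | @insert a s ha ih =>
    rw [Finset.sum_insert ha, Finset.prod_insert ha, ih, zpow_add₀ pQ_ne_zero]

lemma det_tri {r : ℕ} (M : Matrix (Fin r) (Fin r) ℚ_[p])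
    (h : ∀ i j : Fin r, i < j → M i j = 0) : M.det = ∏ i, M i i := by
  apply Matrix.det_of_lowerTriangular
  intro i j hij
  exact h i j hij

/-- integral matrices -/
def IM {m : ℕ} (A : Matrix (Fin m) (Fin m) ℚ_[p]) : Prop := ∀ i j, ‖A i j‖ ≤ 1
/-- matrices of `GL_n(ℤ_p)` -/
def KM {m : ℕ} (A : Matrix (Fin m) (Fin m) ℚ_[p]) : Prop := IM A ∧ ‖A.det‖ = 1
/-- lower unipotent -/
def LU {m : ℕ} (A : Matrix (Fin m) (Fin m) ℚ_[p]) : Prop :=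
  (∀ i, A i i = 1) ∧ ∀ i j : Fin m, i < j → A i j = 0
/-- upper unipotent -/
def UU {m : ℕ} (A : Matrix (Fin m) (Fin m) ℚ_[p]) : Prop :=
  (∀ i, A i i = 1) ∧ ∀ i j : Fin m, j < i → A i j = 0

lemma IM.mul {m : ℕ} {A B : Matrix (Fin m) (Fin m) ℚ_[p]} (hA : IM A) (hB : IM B) :
    IM (A * B) := by
  intro i j
  rw [Matrix.mul_apply]
  refine norm_sum_le_of_le _ _ zero_le_one fun k _ => ?_
  rw [norm_mul]
  exact mul_le_one₀ (hA i k) (norm_nonneg _) (hB k j)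

lemma KM.mul {m : ℕ} {A B : Matrix (Fin m) (Fin m) ℚ_[p]} (hA : KM A) (hB : KM B) :
    KM (A * B) :=
  ⟨hA.1.mul hB.1, by rw [Matrix.det_mul, norm_mul, hA.2, hB.2, one_mul]⟩

lemma KM.det_ne_zero {m : ℕ} {A : Matrix (Fin m) (Fin m) ℚ_[p]} (hA : KM A) :
    A.det ≠ 0 := by
  intro h
  have h2 := hA.2
  rw [h, norm_zero] at h2
  exact zero_ne_one h2

lemma KM.isUnit_det {m : ℕ} {A : Matrix (Fin m) (Fin m) ℚ_[p]} (hA : KM A) :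
    IsUnit A.det := isUnit_iff_ne_zero.mpr hA.det_ne_zero

lemma KM.inv {m : ℕ} {A : Matrix (Fin m) (Fin m) ℚ_[p]} (hA : KM A) : KM A⁻¹ := by
  constructor
  · intro i j
    rw [Matrix.inv_def, Matrix.smul_apply, Ring.inverse_eq_inv', smul_eq_mul, norm_mul,
      norm_inv, hA.2, inv_one, one_mul, Matrix.adjugate_apply]
    refine det_norm_le_one fun a b => ?_
    rw [Matrix.updateRow_apply]
    by_cases h : a = j
    · simp only [h, if_pos rfl]
      by_cases h' : b = i <;> simp [Pi.single_apply, h']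
    · simp only [if_neg h]; exact hA.1 a b
  · rw [Matrix.det_nonsing_inv, Ring.inverse_eq_inv', norm_inv, hA.2, inv_one]


lemma strictMono_le_apply {r : ℕ} {f : Fin r → Fin n} (hf : StrictMono f) (i : Fin r) :
    (i : ℕ) ≤ (f i : ℕ) := by
  have key : ∀ k : ℕ, ∀ i : Fin r, (i : ℕ) = k → k ≤ (f i : ℕ) := by
    intro k
    induction k with
    | zero => intro i _; exact Nat.zero_le _
    | succ k ih =>
      intro i hi
      have hk : k < r := by omega
      have hlt : (⟨k, hk⟩ : Fin r) < i := by
        rw [Fin.lt_def]; simp; omega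
      have h1 := Fin.lt_def.mp (hf hlt)
      have h2 := ih ⟨k, hk⟩ rfl
      omega
  exact key _ i rfl

lemma strictMono_apply_le {r : ℕ} {f : Fin r → Fin n} (hf : StrictMono f) (i : Fin r) :
    (f i : ℕ) ≤ n - r + i := by
  have hrev : StrictMono (fun j : Fin r => (f j.rev).rev) := by
    intro a b hab
    exact Fin.rev_lt_rev.mpr (hf (Fin.rev_lt_rev.mpr hab))
  have h := strictMono_le_apply hrev i.rev
  simp only [Fin.rev_rev, Fin.val_rev] at h
  have h1 := i.2
  have h2 := (f i).2
  omega

lemma sum_restrict {M : Type*} [AddCommMonoid M] {r : ℕ} (f : Fin r → Fin n)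
    (hf : Function.Injective f) (F : Fin n → M)
    (hF : ∀ k : Fin n, (∀ i, f i ≠ k) → F k = 0) :
    ∑ k : Fin n, F k = ∑ i : Fin r, F (f i) := by
  classical
  rw [← Finset.sum_image (g := f) (f := F) (fun a _ b _ h => hf h)]
  exact (Finset.sum_subset (Finset.subset_univ _) (fun x _ hx =>
    hF x (fun i hi => hx (Finset.mem_image.mpr ⟨i, Finset.mem_univ _, hi⟩)))).symm

lemma inj_sum_ge {r : ℕ} (lam : Fin n → ℤ)
    (hlam : ∀ i j : Fin n, i ≤ j → lam j ≤ lam i)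
    (κ : Fin r → Fin n) (hκ : Function.Injective κ)
    (e : Fin r → Fin n) (he : ∀ i : Fin r, (e i : ℕ) = n - r + (i : ℕ)) :
    (∑ i, lam (e i)) ≤ ∑ i, lam (κ i) := by
  classical
  have hcard : (Finset.univ.image κ).card = r := by
    rw [Finset.card_image_of_injective _ hκ, Finset.card_univ, Fintype.card_fin]
  set s := (Finset.univ.image κ).orderEmbOfFin hcard with hs
  have himg : Finset.univ.image (fun i => s i) = Finset.univ.image κ := by
    apply Finset.coe_injective
    rw [Finset.coe_image, Finset.coe_univ, Set.image_univ, Finset.range_orderEmbOfFin]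
  have hsum : ∑ i, lam (κ i) = ∑ i, lam (s i) := by
    rw [← Finset.sum_image (g := κ) (f := lam) (fun a _ b _ h => hκ h), ← himg,
      Finset.sum_image (fun a _ b _ h => (s.injective h))]
  rw [hsum]
  apply Finset.sum_le_sum
  intro i _
  apply hlam
  rw [Fin.le_def, he i]
  exact strictMono_apply_le s.strictMono i

lemma castLE_strictMono (m : ℕ) (hm : m ≤ n) : StrictMono (Fin.castLE hm) :=
  fun a b hab => hab

def emb (n m : ℕ) (hm : m ≤ n) : Fin (n - m) → Fin n :=
  fun i => ⟨m + (i : ℕ), by have := i.2; omega⟩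

lemma emb_strictMono (m : ℕ) (hm : m ≤ n) : StrictMono (emb n m hm) := by
  intro a b hab
  rw [Fin.lt_def]
  simp only [emb]
  have := Fin.lt_def.mp hab
  omega

lemma det_diag_mul_lower {r : ℕ} (ξ : Fin n → ℤ) (u : Matrix (Fin n) (Fin n) ℚ_[p]) (hu : LU u)
    (e : Fin r → Fin n) (he : StrictMono e) :
    ((diagonal (fun i => (p : ℚ_[p]) ^ ξ i) * u).submatrix e e).det
      = (p : ℚ_[p]) ^ (∑ i, ξ (e i)) := by
  have hM : ∀ i j : Fin r, ((diagonal (fun i => (p:ℚ_[p]) ^ ξ i) * u).submatrix e e) i j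
      = (p:ℚ_[p]) ^ ξ (e i) * u (e i) (e j) := by
    intro i j; simp [Matrix.submatrix_apply, Matrix.diagonal_mul]
  rw [det_tri _ (fun i j hij => by rw [hM, hu.2 _ _ (he hij), mul_zero])]
  rw [← prod_p_zpow]
  refine Finset.prod_congr rfl fun i _ => ?_
  rw [hM, hu.1, mul_one]

lemma principal_factor (m : ℕ) (hm : m ≤ n) (h u : Matrix (Fin n) (Fin n) ℚ_[p])
    (d : Fin n → ℚ_[p]) (hu : UU u) :
    (h * diagonal d * u).submatrix (Fin.castLE hm) (Fin.castLE hm) =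
      h.submatrix (Fin.castLE hm) (Fin.castLE hm) * diagonal (fun i => d (Fin.castLE hm i)) *
        u.submatrix (Fin.castLE hm) (Fin.castLE hm) := by
  ext i j
  have hL : ((h * diagonal d * u).submatrix (Fin.castLE hm) (Fin.castLE hm)) i j
      = ∑ k : Fin n, h (Fin.castLE hm i) k * d k * u k (Fin.castLE hm j) := by
    rw [Matrix.submatrix_apply, Matrix.mul_apply]
    simp_rw [Matrix.mul_diagonal]
  have hR : (h.submatrix (Fin.castLE hm) (Fin.castLE hm) *
        diagonal (fun i => d (Fin.castLE hm i)) *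
        u.submatrix (Fin.castLE hm) (Fin.castLE hm)) i j
      = ∑ k : Fin m, h (Fin.castLE hm i) (Fin.castLE hm k) * d (Fin.castLE hm k) *
          u (Fin.castLE hm k) (Fin.castLE hm j) := by
    rw [Matrix.mul_apply]
    simp_rw [Matrix.mul_diagonal, Matrix.submatrix_apply]
  rw [hL, hR]
  apply sum_restrict _ (Fin.castLE_injective hm)
  intro k hk
  have hkm : m ≤ (k : ℕ) := by
    by_contra hc
    exact hk ⟨(k : ℕ), by omega⟩ (Fin.ext (by simp))
  rw [hu.2 k (Fin.castLE hm j) (by rw [Fin.lt_def]; simp; omega), mul_zero]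

lemma corner_bound (m : ℕ) (hm : m ≤ n) (h w : Matrix (Fin n) (Fin n) ℚ_[p])
    (hh : IM h) (hw : IM w) (lam : Fin n → ℤ)
    (hlam : ∀ i j : Fin n, i ≤ j → lam j ≤ lam i) :
    ‖((h * diagonal (fun i => (p:ℚ_[p]) ^ lam i) * w).submatrix (emb n m hm)
        (emb n m hm)).det‖ ≤ (p : ℝ) ^ (-∑ i, lam (emb n m hm i)) := by
  classical
  set e := emb n m hm with he
  set C := diagonal (fun i => (p:ℚ_[p]) ^ lam i) * w with hC
  have hbnd0 : (0:ℝ) ≤ (p : ℝ) ^ (-∑ i, lam (e i)) :=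
    zpow_nonneg (le_of_lt (lt_trans zero_lt_one pR_one_lt)) _
  set f := (Matrix.detRowAlternating (R := ℚ_[p]) (n := Fin (n-m))).toMultilinearMap with hf
  have hdet : ((h * diagonal (fun i => (p:ℚ_[p]) ^ lam i) * w).submatrix e e).det
      = f (fun i : Fin (n-m) => ∑ k : Fin n,
            h (e i) k • (fun j : Fin (n-m) => C k (e j))) := by
    rw [show (h * diagonal (fun i => (p:ℚ_[p]) ^ lam i) * w) = h * C from Matrix.mul_assoc _ _ _]
    show Matrix.detRowAlternating _ = _
    rw [hf, AlternatingMap.coe_multilinearMap]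
    congr 1
    ext i j
    simp [Matrix.mul_apply, Finset.sum_apply, smul_eq_mul, Matrix.submatrix_apply]
  rw [hdet]
  rw [f.map_sum (g := fun (i : Fin (n-m)) (k : Fin n) =>
    h (e i) k • (fun j : Fin (n-m) => C k (e j)))]
  refine norm_sum_le_of_le _ _ hbnd0 ?_
  intro κ _
  rw [f.map_smul_univ]
  have hsub : f (fun i : Fin (n-m) => (fun j : Fin (n-m) => C (κ i) (e j)))
      = (C.submatrix κ e).det := rfl
  rw [smul_eq_mul, norm_mul, hsub]
  by_cases hκ : Function.Injective κ
  · have hCs : C.submatrix κ e = diagonal (fun i => (p:ℚ_[p]) ^ lam (κ i)) * w.submatrix κ e := by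
      ext i j
      simp [hC, Matrix.submatrix_apply, Matrix.diagonal_mul]
    rw [hCs, Matrix.det_mul, Matrix.det_diagonal, prod_p_zpow, norm_mul, Padic.norm_p_zpow]
    have h1 : ‖∏ i, h (e i) (κ i)‖ ≤ 1 := by
      rw [norm_prod]
      exact Finset.prod_le_one (fun i _ => norm_nonneg _) (fun i _ => hh _ _)
    have h2 : ‖(w.submatrix κ e).det‖ ≤ 1 :=
      det_norm_le_one (fun i j => hw _ _)
    have h3 : ((p:ℝ) ^ (-∑ i, lam (κ i))) ≤ (p:ℝ) ^ (-∑ i, lam (e i)) := by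
      apply zpow_le_zpow_right₀ (le_of_lt pR_one_lt)
      have := inj_sum_ge lam hlam κ hκ e (fun i => by simp [he, emb]; omega)
      omega
    calc ‖∏ i, h (e i) (κ i)‖ * ((p:ℝ) ^ (-∑ i, lam (κ i)) * ‖(w.submatrix κ e).det‖)
        ≤ 1 * ((p:ℝ) ^ (-∑ i, lam (κ i)) * 1) := by
          apply mul_le_mul h1 _ (by positivity) zero_le_one
          apply mul_le_mul le_rfl h2 (norm_nonneg _) (zpow_nonneg (by positivity) _)
      _ = (p:ℝ) ^ (-∑ i, lam (κ i)) := by ring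
      _ ≤ (p:ℝ) ^ (-∑ i, lam (e i)) := h3
  · obtain ⟨a, b, hab, hne⟩ : ∃ a b, κ a = κ b ∧ a ≠ b := by
      rw [Function.not_injective_iff] at hκ
      obtain ⟨a, b, h1, h2⟩ := hκ
      exact ⟨a, b, h1, h2⟩
    have hz : (C.submatrix κ e).det = 0 :=
      Matrix.det_zero_of_row_eq hne (by ext j; simp [Matrix.submatrix_apply, hab])
    rw [hz, norm_zero, mul_zero]
    exact hbnd0

/-- partial sum of the first `m` coordinates -/
def PsF (n : ℕ) (ν : Fin n → ℤ) (m : ℕ) : ℤ :=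
  ∑ i ∈ Finset.univ.filter (fun i : Fin n => (i : ℕ) < m), ν i

lemma PsF_zero (ν : Fin n → ℤ) : PsF n ν 0 = 0 := by
  simp [PsF]

lemma PsF_succ (ν : Fin n → ℤ) (t : ℕ) (ht : t < n) :
    PsF n ν (t + 1) = PsF n ν t + ν ⟨t, ht⟩ := by
  have hins : Finset.univ.filter (fun i : Fin n => (i : ℕ) < t + 1)
      = insert (⟨t, ht⟩ : Fin n) (Finset.univ.filter (fun i : Fin n => (i : ℕ) < t)) := by
    ext x
    simp [Fin.ext_iff]
    omega
  rw [PsF, hins, Finset.sum_insert (by simp)]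
  rw [PsF]
  ring

lemma PsF_top (ν : Fin n → ℤ) (m : ℕ) (hm : n ≤ m) : PsF n ν m = ∑ i, ν i := by
  rw [PsF, Finset.filter_true_of_mem (fun i _ => lt_of_lt_of_le i.2 hm)]

lemma domLE_of_partial (μ ξ : Fin n → ℤ) (h1 : ∀ m, PsF n μ m ≤ PsF n ξ m)
    (h2 : PsF n μ n = PsF n ξ n) : domLE n μ ξ := by
  classical
  refine ⟨fun i => (PsF n ξ (i+1) - PsF n μ (i+1)).toNat, ?_⟩
  funext j
  have hcast : ∀ i : ℕ, (((PsF n ξ (i+1) - PsF n μ (i+1)).toNat : ℕ) : ℤ)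
      = PsF n ξ (i+1) - PsF n μ (i+1) :=
    fun i => Int.toNat_of_nonneg (by have := h1 (i+1); omega)
  rw [Finset.sum_apply]
  have hterm : ∀ i ∈ Finset.range (n-1),
      (fun j : Fin n => (((PsF n ξ (i+1) - PsF n μ (i+1)).toNat : ℕ) : ℤ)
          * simpleCoroot n i j) j
      = (if (j:ℕ) = i then PsF n ξ (i+1) - PsF n μ (i+1) else 0)
        - (if (j:ℕ) = i + 1 then PsF n ξ (i+1) - PsF n μ (i+1) else 0) := by
    intro i _
    simp only [simpleCoroot, hcast, mul_sub]
    congr 1 <;> split <;> simp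
  rw [Finset.sum_congr rfl hterm, Finset.sum_sub_distrib]
  have hfirst : (∑ i ∈ Finset.range (n-1),
        if (j:ℕ) = i then PsF n ξ (i+1) - PsF n μ (i+1) else 0)
      = PsF n ξ ((j:ℕ)+1) - PsF n μ ((j:ℕ)+1) := by
    rw [Finset.sum_ite_eq]
    split
    · rfl
    · rename_i hnm
      have hj : (j:ℕ) + 1 = n := by
        have := j.2
        simp [Finset.mem_range] at hnm
        omega
      rw [hj]
      omega
  have hsecond : (∑ i ∈ Finset.range (n-1),
        if (j:ℕ) = i + 1 then PsF n ξ (i+1) - PsF n μ (i+1) else 0)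
      = PsF n ξ (j:ℕ) - PsF n μ (j:ℕ) := by
    rcases Nat.eq_zero_or_pos (j:ℕ) with hj0 | hj0
    · rw [Finset.sum_eq_zero (fun i _ => by rw [if_neg (by omega)]), hj0, PsF_zero, PsF_zero]
      ring
    · obtain ⟨t, ht⟩ : ∃ t, (j:ℕ) = t + 1 := ⟨(j:ℕ) - 1, by omega⟩
      have hcong : ∀ i ∈ Finset.range (n-1),
          (if (j:ℕ) = i + 1 then PsF n ξ (i+1) - PsF n μ (i+1) else 0)
          = (if t = i then PsF n ξ (i+1) - PsF n μ (i+1) else 0) := by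
        intro i _
        refine if_congr (by omega) rfl rfl
      rw [Finset.sum_congr rfl hcong, Finset.sum_ite_eq, if_pos (by
        rw [Finset.mem_range]
        have := j.2
        omega), ht]
  rw [hfirst, hsecond]
  have hstep : ∀ ν : Fin n → ℤ, PsF n ν ((j:ℕ)+1) = PsF n ν (j:ℕ) + ν j := by
    intro ν
    rw [PsF_succ ν (j:ℕ) j.2]
  rw [hstep ξ, hstep μ]
  ring

lemma sum_emb_eq {m : ℕ} (hm : m ≤ n) (ξ : Fin n → ℤ) :
    (∑ i, ξ (emb n m hm i))
      = ∑ i ∈ Finset.univ.filter (fun i : Fin n => ¬ (i:ℕ) < m), ξ i := by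
  rw [← Finset.sum_image (g := emb n m hm) (f := ξ)
    (fun a _ b _ h => (emb_strictMono m hm).injective h)]
  congr 1
  ext x
  simp only [Finset.mem_image, Finset.mem_filter, Finset.mem_univ, true_and, not_lt]
  constructor
  · rintro ⟨a, rfl⟩
    simp [emb]
  · intro hx
    refine ⟨⟨(x:ℕ) - m, by have := x.2; omega⟩, ?_⟩
    simp [emb, Fin.ext_iff]
    omega

lemma sum_castLE_eq {m : ℕ} (hm : m ≤ n) (ξ : Fin n → ℤ) :
    (∑ i : Fin m, ξ (Fin.castLE hm i)) = PsF n ξ m := by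
  rw [PsF, ← Finset.sum_image (g := Fin.castLE hm) (f := ξ)
    (fun a _ b _ h => Fin.castLE_injective hm h)]
  congr 1
  ext x
  simp only [Finset.mem_image, Finset.mem_filter, Finset.mem_univ, true_and]
  constructor
  · rintro ⟨a, rfl⟩
    simpa using a.2
  · intro hx
    exact ⟨⟨(x:ℕ), hx⟩, by simp [Fin.ext_iff]⟩

lemma PsF_add_emb {m : ℕ} (hm : m ≤ n) (ξ : Fin n → ℤ) :
    PsF n ξ m + (∑ i, ξ (emb n m hm i)) = ∑ i, ξ i := by
  rw [sum_emb_eq hm ξ, PsF]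
  exact Finset.sum_filter_add_sum_filter_not _ _ _

lemma antitone_of_adj (lam : Fin n → ℤ)
    (hdom : ∀ i j : Fin n, (j:ℕ) = (i:ℕ) + 1 → lam j ≤ lam i) :
    ∀ i j : Fin n, i ≤ j → lam j ≤ lam i := by
  intro i j hij
  obtain ⟨d, hd⟩ : ∃ d, (j:ℕ) = (i:ℕ) + d := ⟨(j:ℕ) - (i:ℕ), by have := Fin.le_def.mp hij; omega⟩
  clear hij
  induction d generalizing j with
  | zero => have : i = j := Fin.ext (by omega); rw [this]
  | succ d ih =>
    have hlt : (i:ℕ) + d < n := by have := j.2; omega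
    exact le_trans (hdom ⟨(i:ℕ)+d, hlt⟩ j (show (j:ℕ) = (i:ℕ) + d + 1 by omega))
      (ih ⟨(i:ℕ)+d, hlt⟩ rfl)

lemma det_LU {r : ℕ} {A : Matrix (Fin r) (Fin r) ℚ_[p]} (h : LU A) : A.det = 1 := by
  rw [det_tri A h.2]
  simp [h.1]

lemma det_UU {r : ℕ} {A : Matrix (Fin r) (Fin r) ℚ_[p]} (h : UU A) : A.det = 1 := by
  rw [← Matrix.det_transpose, det_tri Aᵀ (fun i j hij => h.2 j i hij)]
  simp [Matrix.transpose_apply, h.1]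

lemma heq_shift {k A B : Matrix (Fin n) (Fin n) ℚ_[p]} (hk : KM k)
    (heq : k * A = B) : A = k⁻¹ * B := by
  rw [← heq, ← Matrix.mul_assoc, Matrix.nonsing_inv_mul _ hk.isUnit_det, Matrix.one_mul]

/-- Core inequality (A): Iwasawa vs Cartan. -/
lemma coreA {lam ξ : Fin n → ℤ} {k u k1 k2 : Matrix (Fin n) (Fin n) ℚ_[p]}
    (hk : KM k) (hu : LU u) (hk1 : KM k1) (hk2 : KM k2)
    (hlam : ∀ i j : Fin n, i ≤ j → lam j ≤ lam i)
    (heq : k * ((diagonal fun i => (p:ℚ_[p]) ^ ξ i) * u)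
      = k1 * (diagonal fun i => (p:ℚ_[p]) ^ lam i) * k2) :
    domLE n ξ lam := by
  have hh : KM (k⁻¹ * k1) := hk.inv.mul hk1
  have heq2 : (diagonal fun i => (p:ℚ_[p]) ^ ξ i) * u
      = (k⁻¹ * k1) * (diagonal fun i => (p:ℚ_[p]) ^ lam i) * k2 := by
    rw [heq_shift hk heq]
    simp [Matrix.mul_assoc]
  -- totals
  have htotL : ((diagonal fun i => (p:ℚ_[p]) ^ ξ i) * u).det = (p:ℚ_[p]) ^ (∑ i, ξ i) := by
    rw [Matrix.det_mul, det_LU hu, Matrix.det_diagonal, prod_p_zpow, mul_one]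
  have htotR : ‖((k⁻¹ * k1) * (diagonal fun i => (p:ℚ_[p]) ^ lam i) * k2).det‖
      = (p:ℝ) ^ (-∑ i, lam i) := by
    rw [Matrix.det_mul, Matrix.det_mul, Matrix.det_diagonal, prod_p_zpow, norm_mul, norm_mul,
      hh.2, hk2.2, Padic.norm_p_zpow, one_mul, mul_one]
  have htot : (∑ i, ξ i) = ∑ i, lam i := by
    have h1 : ‖((diagonal fun i => (p:ℚ_[p]) ^ ξ i) * u).det‖ = (p:ℝ) ^ (-∑ i, ξ i) := by
      rw [htotL, Padic.norm_p_zpow]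
    have h2 := h1.symm.trans ((congrArg (fun M : Matrix (Fin n) (Fin n) ℚ_[p] => ‖M.det‖) heq2).trans htotR)
    have := zpow_right_injective₀ (a := (p:ℝ)) (lt_trans zero_lt_one pR_one_lt) (ne_of_gt pR_one_lt) h2
    omega
  -- partial sums via corners
  have hpart : ∀ m : ℕ, m ≤ n → PsF n ξ m ≤ PsF n lam m := by
    intro m hm
    have hL : (((diagonal fun i => (p:ℚ_[p]) ^ ξ i) * u).submatrix (emb n m hm) (emb n m hm)).det
        = (p:ℚ_[p]) ^ (∑ i, ξ (emb n m hm i)) :=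
      det_diag_mul_lower ξ u hu _ (emb_strictMono m hm)
    have hR := corner_bound m hm (k⁻¹ * k1) k2 hh.1 hk2.1 lam hlam
    rw [← heq2] at hR
    rw [hL, Padic.norm_p_zpow] at hR
    have hsum : (∑ i, lam (emb n m hm i)) ≤ ∑ i, ξ (emb n m hm i) := by
      have := (zpow_le_zpow_iff_right₀ pR_one_lt).mp hR
      omega
    have e1 := PsF_add_emb hm ξ
    have e2 := PsF_add_emb hm lam
    omega
  apply domLE_of_partial
  · intro m
    rcases le_or_gt m n with hm | hm
    · exact hpart m hm
    · rw [PsF_top ξ m (le_of_lt hm), PsF_top lam m (le_of_lt hm)]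
      omega
  · rw [PsF_top ξ n le_rfl, PsF_top lam n le_rfl]
    exact htot

/-- Core inequality (B): the two Iwasawa decompositions. -/
lemma coreB {μ ξ : Fin n → ℤ} {k u k' v : Matrix (Fin n) (Fin n) ℚ_[p]}
    (hk : KM k) (hu : LU u) (hk' : KM k') (hv : UU v)
    (heq : k * ((diagonal fun i => (p:ℚ_[p]) ^ ξ i) * u)
      = k' * (diagonal fun i => (p:ℚ_[p]) ^ μ i) * v) :
    domLE n μ ξ := by
  have hh : KM (k⁻¹ * k') := hk.inv.mul hk'
  have heq2 : (diagonal fun i => (p:ℚ_[p]) ^ ξ i) * u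
      = (k⁻¹ * k') * (diagonal fun i => (p:ℚ_[p]) ^ μ i) * v := by
    rw [heq_shift hk heq]
    simp [Matrix.mul_assoc]
  have htot : (∑ i, ξ i) = ∑ i, μ i := by
    have h1 : ‖((diagonal fun i => (p:ℚ_[p]) ^ ξ i) * u).det‖ = (p:ℝ) ^ (-∑ i, ξ i) := by
      rw [Matrix.det_mul, det_LU hu, Matrix.det_diagonal, prod_p_zpow, mul_one,
        Padic.norm_p_zpow]
    have h2 : ‖((k⁻¹ * k') * (diagonal fun i => (p:ℚ_[p]) ^ μ i) * v).det‖
        = (p:ℝ) ^ (-∑ i, μ i) := by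
      rw [Matrix.det_mul, Matrix.det_mul, Matrix.det_diagonal, prod_p_zpow, det_UU hv,
        norm_mul, norm_mul, hh.2, norm_one, Padic.norm_p_zpow, one_mul, mul_one]
    have h3 := h1.symm.trans ((congrArg (fun M : Matrix (Fin n) (Fin n) ℚ_[p] => ‖M.det‖) heq2).trans h2)
    have := zpow_right_injective₀ (a := (p:ℝ)) (lt_trans zero_lt_one pR_one_lt) (ne_of_gt pR_one_lt) h3
    omega
  have hpart : ∀ m : ℕ, m ≤ n → PsF n μ m ≤ PsF n ξ m := by
    intro m hm
    have hL : (((diagonal fun i => (p:ℚ_[p]) ^ ξ i) * u).submatrix (Fin.castLE hm)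
        (Fin.castLE hm)).det = (p:ℚ_[p]) ^ (PsF n ξ m) := by
      rw [det_diag_mul_lower ξ u hu _ (castLE_strictMono m hm), sum_castLE_eq hm ξ]
    have hfac := principal_factor m hm (k⁻¹ * k') v (fun i => (p:ℚ_[p]) ^ μ i) hv
    have hR : ‖(((k⁻¹ * k') * (diagonal fun i => (p:ℚ_[p]) ^ μ i) * v).submatrix
        (Fin.castLE hm) (Fin.castLE hm)).det‖ ≤ (p:ℝ) ^ (-(PsF n μ m)) := by
      rw [hfac, Matrix.det_mul, Matrix.det_mul, Matrix.det_diagonal]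
      have hdiag : (∏ i : Fin m, (p:ℚ_[p]) ^ μ (Fin.castLE hm i)) = (p:ℚ_[p]) ^ PsF n μ m := by
        rw [prod_p_zpow, sum_castLE_eq hm μ]
      rw [hdiag]
      have hdv : ((v.submatrix (Fin.castLE hm) (Fin.castLE hm)).det) = 1 := by
        refine det_UU ⟨fun i => hv.1 _, fun i j hij => hv.2 _ _ ?_⟩
        exact hij
      rw [hdv, mul_one, norm_mul, Padic.norm_p_zpow]
      have hb : ‖((k⁻¹ * k').submatrix (Fin.castLE hm) (Fin.castLE hm)).det‖ ≤ 1 :=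
        det_norm_le_one (fun i j => hh.1 _ _)
      calc ‖((k⁻¹ * k').submatrix (Fin.castLE hm) (Fin.castLE hm)).det‖ * (p:ℝ) ^ (-PsF n μ m)
          ≤ 1 * (p:ℝ) ^ (-PsF n μ m) :=
            mul_le_mul_of_nonneg_right hb (zpow_nonneg (by positivity) _)
        _ = (p:ℝ) ^ (-PsF n μ m) := one_mul _
    rw [← heq2, hL, Padic.norm_p_zpow] at hR
    have := (zpow_le_zpow_iff_right₀ pR_one_lt).mp hR
    omega
  apply domLE_of_partial
  · intro m
    rcases le_or_gt m n with hm | hm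
    · exact hpart m hm
    · rw [PsF_top μ m (le_of_lt hm), PsF_top ξ m (le_of_lt hm)]
      omega
  · rw [PsF_top μ n le_rfl, PsF_top ξ n le_rfl]
    omega

lemma mem_triple_iff {A B : Set (GL (Fin n) ℚ_[p])} {π g : GL (Fin n) ℚ_[p]} :
    g ∈ A * {π} * B ↔ ∃ a ∈ A, ∃ b ∈ B, g = a * π * b := by
  constructor
  · rintro ⟨x, hx, b, hb, rfl⟩
    obtain ⟨a, ha, π', hπ', rfl⟩ := hx
    rw [Set.mem_singleton_iff] at hπ'
    subst hπ'
    exact ⟨a, ha, b, hb, rfl⟩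
  · rintro ⟨a, ha, b, hb, rfl⟩
    exact ⟨a * π, ⟨a, ha, π, rfl, rfl⟩, b, hb, rfl⟩

lemma decode_KU {g : GL (Fin n) ℚ_[p]} {ξ : Fin n → ℤ}
    (hg : g ∈ Kgp p n * {piPow p n ξ} * Uminus p n) :
    ∃ k u : Matrix (Fin n) (Fin n) ℚ_[p], KM k ∧ LU u ∧
      (g : Matrix (Fin n) (Fin n) ℚ_[p]) = k * ((diagonal fun i => (p:ℚ_[p]) ^ ξ i) * u) := by
  obtain ⟨a, ha, b, hb, rfl⟩ := mem_triple_iff.mp hg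
  refine ⟨(a : Matrix (Fin n) (Fin n) ℚ_[p]), (b : Matrix (Fin n) (Fin n) ℚ_[p]),
    ⟨ha.1, ha.2⟩, ⟨hb.1, hb.2⟩, ?_⟩
  simp [Units.val_mul, Matrix.mul_assoc]
  rfl

lemma decode_KUp {g : GL (Fin n) ℚ_[p]} {μ : Fin n → ℤ}
    (hg : g ∈ Kgp p n * {piPow p n μ} * Uplus p n) :
    ∃ k v : Matrix (Fin n) (Fin n) ℚ_[p], KM k ∧ UU v ∧
      (g : Matrix (Fin n) (Fin n) ℚ_[p]) = k * ((diagonal fun i => (p:ℚ_[p]) ^ μ i) * v) := by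
  obtain ⟨a, ha, b, hb, rfl⟩ := mem_triple_iff.mp hg
  refine ⟨(a : Matrix (Fin n) (Fin n) ℚ_[p]), (b : Matrix (Fin n) (Fin n) ℚ_[p]),
    ⟨ha.1, ha.2⟩, ⟨hb.1, hb.2⟩, ?_⟩
  simp [Units.val_mul, Matrix.mul_assoc]
  rfl

lemma decode_KK {g : GL (Fin n) ℚ_[p]} {lam : Fin n → ℤ}
    (hg : g ∈ Kgp p n * {piPow p n lam} * Kgp p n) :
    ∃ k1 k2 : Matrix (Fin n) (Fin n) ℚ_[p], KM k1 ∧ KM k2 ∧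
      (g : Matrix (Fin n) (Fin n) ℚ_[p]) = k1 * ((diagonal fun i => (p:ℚ_[p]) ^ lam i) * k2) := by
  obtain ⟨a, ha, b, hb, rfl⟩ := mem_triple_iff.mp hg
  refine ⟨(a : Matrix (Fin n) (Fin n) ℚ_[p]), (b : Matrix (Fin n) (Fin n) ℚ_[p]),
    ⟨ha.1, ha.2⟩, ⟨hb.1, hb.2⟩, ?_⟩
  simp [Units.val_mul, Matrix.mul_assoc]
  rfl

lemma encode_KU {g : GL (Fin n) ℚ_[p]} {ξ : Fin n → ℤ} {k u : Matrix (Fin n) (Fin n) ℚ_[p]}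
    (hk : KM k) (hu : LU u)
    (hg : (g : Matrix (Fin n) (Fin n) ℚ_[p]) = k * ((diagonal fun i => (p:ℚ_[p]) ^ ξ i) * u)) :
    g ∈ Kgp p n * {piPow p n ξ} * Uminus p n := by
  have hku : IsUnit k := (Matrix.isUnit_iff_isUnit_det k).mpr hk.isUnit_det
  have huu : IsUnit u := (Matrix.isUnit_iff_isUnit_det u).mpr
    (by rw [det_LU hu]; exact isUnit_one)
  refine mem_triple_iff.mpr ⟨hku.unit, ?_, huu.unit, ?_, ?_⟩
  · refine ⟨fun i j => ?_, ?_⟩ <;> rw [IsUnit.unit_spec]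
    exacts [hk.1 i j, hk.2]
  · refine ⟨fun i => ?_, fun i j hij => ?_⟩ <;> rw [IsUnit.unit_spec]
    exacts [hu.1 i, hu.2 i j hij]
  · apply Units.ext
    show (g : Matrix (Fin n) (Fin n) ℚ_[p]) = _
    rw [hg]
    simp [Units.val_mul, IsUnit.unit_spec, Matrix.mul_assoc]
    rfl

lemma lemA_GL {g : GL (Fin n) ℚ_[p]} {ξ lam : Fin n → ℤ}
    (hlam : ∀ i j : Fin n, i ≤ j → lam j ≤ lam i)
    (h1 : g ∈ Kgp p n * {piPow p n ξ} * Uminus p n)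
    (h2 : g ∈ Kgp p n * {piPow p n lam} * Kgp p n) :
    domLE n ξ lam := by
  obtain ⟨k, u, hk, hu, hgu⟩ := decode_KU h1
  obtain ⟨k1, k2, hk1, hk2, hgk⟩ := decode_KK h2
  exact coreA hk hu hk1 hk2 hlam
    ((hgu.symm.trans hgk).trans (Matrix.mul_assoc k1 _ k2).symm)

lemma lemB_GL {g : GL (Fin n) ℚ_[p]} {ξ μ : Fin n → ℤ}
    (h1 : g ∈ Kgp p n * {piPow p n ξ} * Uminus p n)
    (h2 : g ∈ Kgp p n * {piPow p n μ} * Uplus p n) :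
    domLE n μ ξ := by
  obtain ⟨k, u, hk, hu, hgu⟩ := decode_KU h1
  obtain ⟨k', v, hk', hv, hgv⟩ := decode_KUp h2
  exact coreB hk hu hk' hv
    ((hgu.symm.trans hgv).trans (Matrix.mul_assoc k' _ v).symm)

lemma pivot {r : ℕ} (A : Matrix (Fin (r+1)) (Fin (r+1)) ℚ_[p]) (hA : IsUnit A.det) :
    ∃ (k0 : Matrix (Fin (r+1)) (Fin (r+1)) ℚ_[p]) (a : ℤ),
      KM k0 ∧ (∀ i : Fin (r+1), i ≠ Fin.last r → (k0 * A) i (Fin.last r) = 0) ∧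
        (k0 * A) (Fin.last r) (Fin.last r) = (p:ℚ_[p]) ^ a := by
  classical
  set v : Fin (r+1) → ℚ_[p] := fun i => A i (Fin.last r) with hv
  obtain ⟨i0, -, hmax⟩ := Finset.exists_max_image Finset.univ (fun i => ‖v i‖)
    ⟨Fin.last r, Finset.mem_univ _⟩
  have hvne : ∃ j, v j ≠ 0 := by
    by_contra h
    push_neg at h
    exact hA.ne_zero (Matrix.det_eq_zero_of_column_eq_zero (Fin.last r) (fun i => h i))
  obtain ⟨j0, hj0⟩ := hvne
  have hvi0 : v i0 ≠ 0 := by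
    intro h0
    have hle := hmax j0 (Finset.mem_univ _)
    rw [h0, norm_zero] at hle
    exact hj0 (norm_eq_zero.mp (le_antisymm hle (norm_nonneg _)))
  set a : ℤ := (v i0).valuation with ha
  have hnvi0 : ‖v i0‖ = (p:ℝ) ^ (-a) := Padic.norm_eq_zpow_neg_valuation hvi0
  set c : ℚ_[p] := (p:ℚ_[p]) ^ a / v i0 with hc
  have hnc : ‖c‖ = 1 := by
    rw [hc, norm_div, Padic.norm_p_zpow, hnvi0, div_self]
    exact zpow_ne_zero _ (Nat.cast_pos.mpr (Fact.out : p.Prime).pos).ne'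
  set σ : Equiv.Perm (Fin (r+1)) := Equiv.swap i0 (Fin.last r) with hσ
  set M : Matrix (Fin (r+1)) (Fin (r+1)) ℚ_[p] := Matrix.of (fun i j =>
    if i = Fin.last r then (if j = Fin.last r then c else 0)
    else (if j = i then (1:ℚ_[p]) else 0) - (if j = Fin.last r then v (σ i) / v i0 else 0))
    with hM
  have hMapp : ∀ i j, M i j =
      if i = Fin.last r then (if j = Fin.last r then c else 0)
      else (if j = i then (1:ℚ_[p]) else 0) - (if j = Fin.last r then v (σ i) / v i0 else 0) :=
    fun i j => rfl
  set P : Matrix (Fin (r+1)) (Fin (r+1)) ℚ_[p] := σ.toPEquiv.toMatrix with hP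
  have hPA : P * A = A.submatrix σ id := PEquiv.toMatrix_toPEquiv_mul σ A
  have hMN : ∀ (N : Matrix (Fin (r+1)) (Fin (r+1)) ℚ_[p]) i j, (M * N) i j =
      (if i = Fin.last r then c * N (Fin.last r) j
        else N i j - (v (σ i) / v i0) * N (Fin.last r) j) := by
    intro N i j
    rw [Matrix.mul_apply]
    by_cases hi : i = Fin.last r
    · rw [if_pos hi]
      simp [hMapp, hi, ite_mul, zero_mul, Finset.sum_ite_eq']
    · rw [if_neg hi]
      simp only [hMapp, if_neg hi, sub_mul, ite_mul, one_mul, zero_mul]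
      rw [Finset.sum_sub_distrib,
        Finset.sum_ite_eq' Finset.univ i (fun k => N k j),
        Finset.sum_ite_eq' Finset.univ (Fin.last r) (fun k => v (σ i) / v i0 * N k j)]
      simp
  have hMP : ∀ i j, (M * (P * A)) i j =
      (if i = Fin.last r then c * A i0 j
        else A (σ i) j - (v (σ i) / v i0) * A i0 j) := by
    intro i j
    rw [hMN, hPA]
    have hσlast : σ (Fin.last r) = i0 := Equiv.swap_apply_right i0 (Fin.last r)
    simp [Matrix.submatrix_apply, hσlast]
  have hKMP : KM P := by
    constructor
    · intro i j
      rw [hP, PEquiv.toMatrix_toPEquiv_eq]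
      by_cases h : σ i = j <;> simp [Matrix.one_apply, h]
    · rw [hP, Matrix.det_permutation]
      rcases Int.units_eq_one_or (Equiv.Perm.sign σ) with h | h <;> rw [h] <;> simp
  have hKMM : KM M := by
    constructor
    · intro i j
      rw [hMapp]
      by_cases hi : i = Fin.last r
      · rw [if_pos hi]
        by_cases hj : j = Fin.last r <;> simp [hj, hnc]
      · rw [if_neg hi]
        by_cases hj1 : j = i
        · have hj2 : ¬ j = Fin.last r := fun h => hi (by rw [← hj1, h])
          rw [if_pos hj1, if_neg hj2, sub_zero, norm_one]
        · by_cases hj2 : j = Fin.last r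
          · rw [if_neg hj1, if_pos hj2, zero_sub, norm_neg, norm_div]
            exact div_le_one_of_le₀ (hmax _ (Finset.mem_univ _)) (norm_nonneg _)
          · simp [hj1, hj2]
    · have htri : M.BlockTriangular id := by
        intro i j hij
        rw [hMapp]
        have hji : ¬ j = i := ne_of_lt hij
        have hjl : ¬ j = Fin.last r := by
          intro h
          exact absurd (lt_of_lt_of_le hij (Fin.le_last i)) (by rw [h]; exact lt_irrefl _)
        by_cases hi : i = Fin.last r <;> simp [hi, hji, hjl]
      rw [Matrix.det_of_upperTriangular htri]
      have hprod : (∏ i, M i i) = c := by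
        rw [Fin.prod_univ_castSucc]
        have h1 : ∀ k : Fin r, M k.castSucc k.castSucc = 1 := by
          intro k
          rw [hMapp, if_neg (Fin.castSucc_lt_last k).ne]
          simp [(Fin.castSucc_lt_last k).ne]
        rw [Finset.prod_congr rfl (fun k _ => h1 k)]
        rw [hMapp, if_pos rfl, if_pos rfl]
        simp
      rw [hprod, hnc]
  refine ⟨M * P, a, hKMM.mul hKMP, ?_, ?_⟩
  · intro i hi
    rw [Matrix.mul_assoc, hMP, if_neg hi]
    show A (σ i) (Fin.last r) - (v (σ i) / v i0) * A i0 (Fin.last r) = 0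
    rw [show A (σ i) (Fin.last r) = v (σ i) from rfl, show A i0 (Fin.last r) = v i0 from rfl,
      div_mul_cancel₀ _ hvi0, sub_self]
  · rw [Matrix.mul_assoc, hMP, if_pos rfl]
    show c * A i0 (Fin.last r) = (p:ℚ_[p]) ^ a
    rw [show A i0 (Fin.last r) = v i0 from rfl, hc]
    exact div_mul_cancel₀ _ hvi0

/-- extend a matrix by a last row `b` and corner entry `d`, with zero last column above. -/
noncomputable def ext1 {r : ℕ} (X : Matrix (Fin r) (Fin r) ℚ_[p]) (b : Fin r → ℚ_[p]) (d : ℚ_[p]) :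
    Matrix (Fin (r+1)) (Fin (r+1)) ℚ_[p] :=
  Matrix.of fun i j =>
    if hj : j = Fin.last r then (if i = Fin.last r then d else 0)
    else if hi : i = Fin.last r then b (j.castPred hj)
    else X (i.castPred hi) (j.castPred hj)

section Ext1
variable {r : ℕ} (X : Matrix (Fin r) (Fin r) ℚ_[p]) (b : Fin r → ℚ_[p]) (d : ℚ_[p])

lemma ext1_cc (i j : Fin r) : ext1 X b d i.castSucc j.castSucc = X i j := by
  simp only [ext1, Matrix.of_apply, dif_neg (Fin.castSucc_lt_last _).ne,
    Fin.castPred_castSucc]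

lemma ext1_lc (j : Fin r) : ext1 X b d (Fin.last r) j.castSucc = b j := by
  simp [ext1, dif_neg (Fin.castSucc_lt_last _).ne]

lemma ext1_cl (i : Fin r) : ext1 X b d i.castSucc (Fin.last r) = 0 := by
  simp [ext1, if_neg (Fin.castSucc_lt_last _).ne]

lemma ext1_ll : ext1 X b d (Fin.last r) (Fin.last r) = d := by
  simp [ext1]

lemma ext1_mul (Y : Matrix (Fin r) (Fin r) ℚ_[p]) (b2 : Fin r → ℚ_[p]) (d2 : ℚ_[p]) :
    ext1 X b d * ext1 Y b2 d2
      = ext1 (X * Y) (fun j => (∑ k, b k * Y k j) + d * b2 j) (d * d2) := by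
  ext i j
  rw [Matrix.mul_apply, Fin.sum_univ_castSucc]
  induction j using Fin.lastCases with
  | last =>
    induction i using Fin.lastCases with
    | last => simp [ext1_cl, ext1_ll]
    | cast i' => simp [ext1_cl, ext1_ll, ext1_cc]
  | cast j' =>
    induction i using Fin.lastCases with
    | last => simp [ext1_lc, ext1_ll, ext1_cc]
    | cast i' => simp [ext1_cc, ext1_lc, ext1_cl, Matrix.mul_apply]

lemma ext1_submatrix : (ext1 X b d).submatrix Fin.castSucc Fin.castSucc = X := by
  ext i j
  rw [Matrix.submatrix_apply, ext1_cc]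

lemma ext1_det : (ext1 X b d).det = d * X.det := by
  rw [Matrix.det_succ_column _ (Fin.last r), Fin.sum_univ_castSucc]
  have h0 : ∀ k : Fin r, (-1:ℚ_[p]) ^ ((k.castSucc : ℕ) + (Fin.last r : ℕ)) *
      ext1 X b d k.castSucc (Fin.last r) *
      ((ext1 X b d).submatrix (k.castSucc).succAbove (Fin.last r).succAbove).det = 0 := by
    intro k
    rw [ext1_cl, mul_zero, zero_mul]
  rw [Finset.sum_congr rfl (fun k _ => h0 k), Finset.sum_const_zero, zero_add]
  rw [ext1_ll, Fin.succAbove_last, ext1_submatrix, Fin.val_last,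
    Even.neg_one_pow ⟨r, rfl⟩, one_mul]

lemma ext1_diagonal (dv : Fin r → ℚ_[p]) :
    ext1 (diagonal dv) 0 d = diagonal (Fin.snoc dv d) := by
  ext i j
  induction j using Fin.lastCases with
  | last =>
    induction i using Fin.lastCases with
    | last => rw [ext1_ll, Matrix.diagonal_apply_eq, Fin.snoc_last]
    | cast i' =>
      rw [ext1_cl, Matrix.diagonal_apply_ne _ (Fin.castSucc_lt_last _).ne]
  | cast j' =>
    induction i using Fin.lastCases with
    | last =>
      rw [ext1_lc, Matrix.diagonal_apply_ne _ (Fin.castSucc_lt_last _).ne', Pi.zero_apply]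
    | cast i' =>
      rw [ext1_cc]
      by_cases h : i' = j'
      · rw [h, Matrix.diagonal_apply_eq, Matrix.diagonal_apply_eq, Fin.snoc_castSucc]
      · rw [Matrix.diagonal_apply_ne _ h,
          Matrix.diagonal_apply_ne _ (fun hc => h (Fin.castSucc_injective _ hc))]

lemma KM_ext1 (hX : KM X) : KM (ext1 X 0 1) := by
  constructor
  · intro i j
    induction j using Fin.lastCases with
    | last =>
      induction i using Fin.lastCases with
      | last => rw [ext1_ll, norm_one]
      | cast i' => rw [ext1_cl, norm_zero]; exact zero_le_one
    | cast j' =>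
      induction i using Fin.lastCases with
      | last => rw [ext1_lc, Pi.zero_apply, norm_zero]; exact zero_le_one
      | cast i' => rw [ext1_cc]; exact hX.1 i' j'
  · rw [ext1_det, one_mul]
    exact hX.2

lemma LU_ext1 {u : Matrix (Fin r) (Fin r) ℚ_[p]} (hu : LU u) (bb : Fin r → ℚ_[p]) :
    LU (ext1 u bb 1) := by
  constructor
  · intro i
    induction i using Fin.lastCases with
    | last => rw [ext1_ll]
    | cast i' => rw [ext1_cc]; exact hu.1 i'
  · intro i j hij
    induction j using Fin.lastCases with
    | last =>
      induction i using Fin.lastCases with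
      | last => exact absurd hij (lt_irrefl _)
      | cast i' => rw [ext1_cl]
    | cast j' =>
      induction i using Fin.lastCases with
      | last => exact absurd hij (not_lt.mpr (Fin.castSucc_lt_last j').le)
      | cast i' =>
        rw [ext1_cc]
        exact hu.2 i' j' (Fin.castSucc_lt_castSucc_iff.mp hij)

end Ext1

lemma iwasawa : ∀ (r : ℕ) (A : Matrix (Fin r) (Fin r) ℚ_[p]), IsUnit A.det →
    ∃ (k : Matrix (Fin r) (Fin r) ℚ_[p]) (ξ : Fin r → ℤ) (u : Matrix (Fin r) (Fin r) ℚ_[p]),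
      KM k ∧ LU u ∧ A = k * ((diagonal fun i => (p:ℚ_[p]) ^ ξ i) * u) := by
  intro r
  induction r with
  | zero =>
    intro A _
    refine ⟨1, 0, 1, ?_, ?_, ?_⟩
    · exact ⟨fun i j => i.elim0, by rw [Matrix.det_one, norm_one]⟩
    · exact ⟨fun i => i.elim0, fun i j _ => i.elim0⟩
    · apply Matrix.ext
      intro i
      exact i.elim0
  | succ r ih =>
    intro A hA
    obtain ⟨k0, a, hk0, hcol, hlast⟩ := pivot A hA
    set B := k0 * A with hB
    have hdetB : IsUnit B.det := by
      rw [hB, Matrix.det_mul]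
      exact hk0.isUnit_det.mul hA
    set B' := B.submatrix Fin.castSucc Fin.castSucc with hB'
    have hBeq : B = ext1 B' (fun j => B (Fin.last r) j.castSucc) ((p:ℚ_[p]) ^ a) := by
      ext i j
      induction j using Fin.lastCases with
      | last =>
        induction i using Fin.lastCases with
        | last => rw [ext1_ll, hlast]
        | cast i' => rw [ext1_cl, hcol _ (Fin.castSucc_lt_last i').ne]
      | cast j' =>
        induction i using Fin.lastCases with
        | last => rw [ext1_lc]
        | cast i' => rw [ext1_cc, hB', Matrix.submatrix_apply]
    have hdetB' : IsUnit B'.det := by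
      have hfac : B.det = (p:ℚ_[p]) ^ a * B'.det := by
        conv_lhs => rw [hBeq]
        rw [ext1_det]
      rw [hfac] at hdetB
      refine isUnit_iff_ne_zero.mpr (fun h0 => ?_)
      rw [h0, mul_zero] at hdetB
      exact hdetB.ne_zero rfl
    obtain ⟨k1, ξ1, u1, hk1, hu1, hdec⟩ := ih B' hdetB'
    set b' : Fin r → ℚ_[p] := fun j => (p:ℚ_[p]) ^ (-a) * B (Fin.last r) j.castSucc with hb'
    refine ⟨k0⁻¹ * ext1 k1 0 1, Fin.snoc ξ1 a, ext1 u1 b' 1,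
      hk0.inv.mul (KM_ext1 k1 hk1), LU_ext1 hu1 b', ?_⟩
    have hA0 : A = k0⁻¹ * B := by
      rw [hB, ← Matrix.mul_assoc, Matrix.nonsing_inv_mul _ hk0.isUnit_det, Matrix.one_mul]
    rw [hA0, Matrix.mul_assoc]
    congr 1
    have hfun : (fun i => (p:ℚ_[p]) ^ (Fin.snoc (α := fun _ => ℤ) ξ1 a i))
        = Fin.snoc (α := fun _ => ℚ_[p]) (fun i => (p:ℚ_[p]) ^ ξ1 i) ((p:ℚ_[p]) ^ a) := by
      funext i
      induction i using Fin.lastCases with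
      | last => rw [Fin.snoc_last, Fin.snoc_last]
      | cast i' => rw [Fin.snoc_castSucc, Fin.snoc_castSucc]
    rw [hfun, ← ext1_diagonal, ext1_mul, ext1_mul, hBeq, ← hdec]
    apply Matrix.ext
    intro i j
    induction j using Fin.lastCases with
    | last =>
      induction i using Fin.lastCases with
      | last => rw [ext1_ll, ext1_ll, one_mul, mul_one]
      | cast i' => rw [ext1_cl, ext1_cl]
    | cast j' =>
      induction i using Fin.lastCases with
      | last =>
        rw [ext1_lc, ext1_lc]
        simp only [Pi.zero_apply, zero_mul, Finset.sum_const_zero, zero_add, one_mul, hb']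
        rw [← mul_assoc, ← zpow_add₀ pQ_ne_zero]
        simp
      | cast i' => rw [ext1_cc, ext1_cc]

end SphDec


open Pointwise in
/-- **Decomposition used in the proof of Spherical Finiteness** (Section 8.2, type `A_{n−1}`
instance): for `λ` dominant, `K·π^{ξ}·U⁻ ∩ K·π^{λ}·K = ∅` unless `ξ ≤ λ`, and
`K·π^{λ}·K ∩ K·π^{μ}·U⁺ = ⋃_{μ ≤ ξ ≤ λ} (K·π^{ξ}·U⁻ ∩ K·π^{μ}·U⁺ ∩ K·π^{λ}·K)`. -/
theorem spherical_decomposition (p : ℕ) [Fact p.Prime] (n : ℕ) (hn : 2 ≤ n)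
    (lam μ : Fin n → ℤ)
    (hdom : ∀ i j : Fin n, (j : ℕ) = (i : ℕ) + 1 → lam j ≤ lam i) :
    (∀ ξ : Fin n → ℤ,
      ((Kgp p n * {piPow p n ξ} * Uminus p n) ∩
          (Kgp p n * {piPow p n lam} * Kgp p n)).Nonempty → domLE n ξ lam) ∧
    (Kgp p n * {piPow p n lam} * Kgp p n) ∩ (Kgp p n * {piPow p n μ} * Uplus p n) =
      ⋃ ξ ∈ {ξ : Fin n → ℤ | domLE n μ ξ ∧ domLE n ξ lam},
        (Kgp p n * {piPow p n ξ} * Uminus p n) ∩ (Kgp p n * {piPow p n μ} * Uplus p n) ∩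
          (Kgp p n * {piPow p n lam} * Kgp p n) := by
  have hanti : ∀ i j : Fin n, i ≤ j → lam j ≤ lam i := SphDec.antitone_of_adj lam hdom
  constructor
  · rintro ξ ⟨g, hg1, hg2⟩
    exact SphDec.lemA_GL hanti hg1 hg2
  · ext g
    simp only [Set.mem_iUnion, Set.mem_inter_iff, Set.mem_setOf_eq]
    constructor
    · rintro ⟨hgK, hgU⟩
      have hdet : IsUnit ((g : Matrix (Fin n) (Fin n) ℚ_[p]).det) :=
        (Matrix.isUnit_iff_isUnit_det _).mp g.isUnit
      obtain ⟨k, ξ, u, hk, hu, hgd⟩ := SphDec.iwasawa n (g : Matrix (Fin n) (Fin n) ℚ_[p]) hdet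
      have hmem : g ∈ Kgp p n * {piPow p n ξ} * Uminus p n := SphDec.encode_KU hk hu hgd
      exact ⟨ξ, ⟨SphDec.lemB_GL hmem hgU, SphDec.lemA_GL hanti hmem hgK⟩, ⟨hmem, hgU⟩, hgK⟩
    · rintro ⟨ξ, -, ⟨-, hgUp⟩, hgK⟩
      exact ⟨hgK, hgUp⟩
end
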